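/- arXiv:1312.2816 — 10 statements merged into one kernel-verified Lean document; each statement's English description precedes it below -/
import Mathlib

section
/- If G is a graph with degeneracy d and k ≥ d + 2, then any two proper k-colourings of G can be transformed into one another by recolouring one vertex at a time, with every intermediate colouring a proper k-colouring (i.e., G is k-mixing). -/
/-- `c` is a proper `k`-colouring of `G`. -/
def IsProperColoring {V : Type} (G : SimpleGraph V) {k : ℕ} (c : V → Fin k) : Prop :=
  ∀ ⦃u v : V⦄, G.Adj u v → c u ≠ c v

/-- A single-vertex recolouring step between proper `k`-colourings. -/
def RecolStep {V : Type} (G : SimpleGraph V) {k : ℕ} (c c' : V → Fin k) : Prop :=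
  IsProperColoring G c ∧ IsProperColoring G c' ∧
    ∃ v : V, c v ≠ c' v ∧ ∀ w : V, w ≠ v → c w = c' w

/-- `G` is `k`-mixing: any two proper `k`-colourings are connected by
single-vertex recolourings. -/
def IsMixing {V : Type} (G : SimpleGraph V) (k : ℕ) : Prop :=
  ∀ c c' : V → Fin k, IsProperColoring G c → IsProperColoring G c' →
    Relation.ReflTransGen (RecolStep G) c c'
/-- `G` is `d`-degenerate: every (induced sub)finset has a vertex with at most `d`
neighbours inside it. -/
def Degenerate {V : Type} [DecidableEq V] (G : SimpleGraph V) [DecidableRel G.Adj] (d : ℕ) : Prop :=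
  ∀ S : Finset V, S.Nonempty → ∃ v ∈ S, (S.filter (G.Adj v)).card ≤ d

lemma update_proper {V : Type} [DecidableEq V] (G : SimpleGraph V) {k : ℕ}
    {e : V → Fin k} (he : IsProperColoring G e) (x : V) (α : Fin k)
    (h : ∀ u, G.Adj x u → α ≠ e u) :
    IsProperColoring G (Function.update e x α) := by
  intro a b hab
  rcases eq_or_ne a x with rfl | ha
  · rw [Function.update_self, Function.update_of_ne (G.ne_of_adj hab).symm]
    exact h b hab
  · rw [Function.update_of_ne ha]
    rcases eq_or_ne b x with rfl | hb
    · rw [Function.update_self]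
      exact (h a hab.symm).symm
    · rw [Function.update_of_ne hb]
      exact he hab

lemma recolStep_update {V : Type} [DecidableEq V] (G : SimpleGraph V) {k : ℕ}
    {e : V → Fin k} (he : IsProperColoring G e) (x : V) (α : Fin k)
    (hne : e x ≠ α) (h : ∀ u, G.Adj x u → α ≠ e u) :
    RecolStep G e (Function.update e x α) :=
  ⟨he, update_proper G he x α h, x, by simpa using hne,
    fun w hw => (Function.update_of_ne hw _ _).symm⟩

lemma exists_free {k : ℕ} (s : Finset (Fin k)) (h : s.card < k) : ∃ β, β ∉ s := by
  by_contra hc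
  push_neg at hc
  have : s = Finset.univ := Finset.eq_univ_iff_forall.mpr hc
  simp only [this, Finset.card_univ, Fintype.card_fin] at h
  exact lt_irrefl _ h

instance comapDecidable {V : Type} (G : SimpleGraph V) [DecidableRel G.Adj] (v : V) :
    DecidableRel (G.comap (Subtype.val : {w : V // w ≠ v} → V)).Adj :=
  fun a b => inferInstanceAs (Decidable (G.Adj a.val b.val))

lemma degenerate_comap {V : Type} [DecidableEq V] (G : SimpleGraph V)
    [DecidableRel G.Adj] {d : ℕ} (hdeg : Degenerate G d) (v : V) :
    Degenerate (G.comap (Subtype.val : {w : V // w ≠ v} → V)) d := by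
  intro S hS
  obtain ⟨u, hu, hcard⟩ := hdeg (S.map ⟨Subtype.val, Subtype.val_injective⟩) hS.map
  obtain ⟨u', hu', rfl⟩ := Finset.mem_map.mp hu
  refine ⟨u', hu', le_trans ?_ hcard⟩
  have hsub : (S.filter ((G.comap Subtype.val).Adj u')).map
      ⟨Subtype.val, Subtype.val_injective⟩ ⊆
      (S.map ⟨Subtype.val, Subtype.val_injective⟩).filter (G.Adj u'.val) := by
    intro x hx
    obtain ⟨y, hy, rfl⟩ := Finset.mem_map.mp hx
    rw [Finset.mem_filter] at hy
    rw [Finset.mem_filter]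
    exact ⟨Finset.mem_map_of_mem _ hy.1, hy.2⟩
  calc (S.filter ((G.comap Subtype.val).Adj u')).card
      = ((S.filter ((G.comap Subtype.val).Adj u')).map
          ⟨Subtype.val, Subtype.val_injective⟩).card := (Finset.card_map _).symm
    _ ≤ _ := Finset.card_le_card hsub

lemma lift_chain {V : Type} [Fintype V] [DecidableEq V] (G : SimpleGraph V)
    [DecidableRel G.Adj] {k d : ℕ} (hk : d + 2 ≤ k) (v : V)
    (hv : (Finset.univ.filter (G.Adj v)).card ≤ d)
    {b b' : {w : V // w ≠ v} → Fin k}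
    (h : Relation.ReflTransGen (RecolStep (G.comap (Subtype.val : {w : V // w ≠ v} → V))) b b') :
    ∀ e : V → Fin k, IsProperColoring G e → (∀ w : {w : V // w ≠ v}, e w.val = b w) →
      ∃ e' : V → Fin k, IsProperColoring G e' ∧ (∀ w : {w : V // w ≠ v}, e' w.val = b' w) ∧
        Relation.ReflTransGen (RecolStep G) e e' := by
  induction h using Relation.ReflTransGen.head_induction_on with
  | refl => exact fun e he hext => ⟨e, he, hext, Relation.ReflTransGen.refl⟩
  | head hstep hrest ih =>
    rename_i b₀ b₁
    intro e he hext
    obtain ⟨hb₀, hb₁, w₀, hw₀ne, hw₀eq⟩ := hstep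
    set α := b₁ w₀ with hα
    -- key fact: α avoids e u for all neighbours u ≠ v of w₀
    have key : ∀ u : V, u ≠ v → G.Adj w₀.val u → α ≠ e u := by
      intro u hu hadj
      have hadj' : (G.comap (Subtype.val : {w : V // w ≠ v} → V)).Adj w₀ ⟨u, hu⟩ := hadj
      have hne' : (⟨u, hu⟩ : {w : V // w ≠ v}) ≠ w₀ := by
        intro hcon
        exact G.ne_of_adj hadj (by rw [← hcon])
      have : e u = b₁ ⟨u, hu⟩ := by
        rw [hext ⟨u, hu⟩, hw₀eq _ hne']
      rw [this]
      exact hb₁ hadj'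
    have hew₀ : e w₀.val ≠ α := by
      rw [hext w₀]
      exact hw₀ne
    by_cases hva : G.Adj w₀.val v ∧ e v = α
    · -- must first recolour v away from α
      obtain ⟨β, hβ⟩ := exists_free (insert α ((Finset.univ.filter (G.Adj v)).image e)) (by
        calc (insert α ((Finset.univ.filter (G.Adj v)).image e)).card
            ≤ ((Finset.univ.filter (G.Adj v)).image e).card + 1 := Finset.card_insert_le _ _
          _ ≤ (Finset.univ.filter (G.Adj v)).card + 1 :=
              Nat.add_le_add_right (Finset.card_image_le) 1
          _ ≤ d + 1 := Nat.add_le_add_right hv 1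
          _ < k := by omega)
      have hβα : β ≠ α := fun hcon => hβ (hcon ▸ Finset.mem_insert_self _ _)
      have hβnb : ∀ u, G.Adj v u → β ≠ e u := by
        intro u hadj hcon
        exact hβ (Finset.mem_insert_of_mem (Finset.mem_image.mpr
          ⟨u, Finset.mem_filter.mpr ⟨Finset.mem_univ u, hadj⟩, hcon.symm⟩))
      have hev : e v ≠ β := fun hcon => hβα (hcon ▸ hva.2.symm).symm
      set e₁ := Function.update e v β with he₁def
      have step1 : RecolStep G e e₁ := recolStep_update G he v β hev hβnb
      have he₁ : IsProperColoring G e₁ := update_proper G he v β hβnb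
      have he₁ext : ∀ w : {w : V // w ≠ v}, e₁ w.val = b₀ w := by
        intro w
        rw [he₁def, Function.update_of_ne w.2, hext]
      have he₁v : e₁ v = β := Function.update_self _ _ _
      have hkey₁ : ∀ u, G.Adj w₀.val u → α ≠ e₁ u := by
        intro u hadj
        rcases eq_or_ne u v with rfl | hu
        · rw [he₁v]; exact fun hcon => hβα hcon.symm
        · rw [he₁def, Function.update_of_ne hu]
          exact key u hu hadj
      have he₁w₀ : e₁ w₀.val ≠ α := by rw [he₁ext w₀]; exact hw₀ne
      set e₂ := Function.update e₁ w₀.val α with he₂def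
      have step2 : RecolStep G e₁ e₂ := recolStep_update G he₁ w₀.val α he₁w₀ hkey₁
      have he₂ : IsProperColoring G e₂ := update_proper G he₁ w₀.val α hkey₁
      have he₂ext : ∀ w : {w : V // w ≠ v}, e₂ w.val = b₁ w := by
        intro w
        rcases eq_or_ne w w₀ with rfl | hw
        · rw [he₂def, Function.update_self]
        · rw [he₂def, Function.update_of_ne (fun hcon => hw (Subtype.ext hcon)),
            he₁ext w, hw₀eq w hw]
      obtain ⟨e', he', he'ext, hchain⟩ := ih e₂ he₂ he₂ext
      exact ⟨e', he', he'ext, (hchain.head step2).head step1⟩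
    · -- can recolour w₀ directly
      have hkey : ∀ u, G.Adj w₀.val u → α ≠ e u := by
        intro u hadj
        rcases eq_or_ne u v with rfl | hu
        · intro hcon
          exact hva ⟨hadj, hcon.symm⟩
        · exact key u hu hadj
      set e₁ := Function.update e w₀.val α with he₁def
      have step1 : RecolStep G e e₁ := recolStep_update G he w₀.val α hew₀ hkey
      have he₁ : IsProperColoring G e₁ := update_proper G he w₀.val α hkey
      have he₁ext : ∀ w : {w : V // w ≠ v}, e₁ w.val = b₁ w := by
        intro w
        rcases eq_or_ne w w₀ with rfl | hw
        · rw [he₁def, Function.update_self]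
        · rw [he₁def, Function.update_of_ne (fun hcon => hw (Subtype.ext hcon)),
            hext w, hw₀eq w hw]
      obtain ⟨e', he', he'ext, hchain⟩ := ih e₁ he₁ he₁ext
      exact ⟨e', he', he'ext, hchain.head step1⟩

lemma aux_mixing : ∀ n : ℕ, ∀ (V : Type) [Fintype V] [DecidableEq V]
    (G : SimpleGraph V) [DecidableRel G.Adj] (d k : ℕ),
    Fintype.card V = n → Degenerate G d → d + 2 ≤ k → IsMixing G k := by
  intro n
  induction n using Nat.strong_induction_on with
  | _ n ih =>
    intro V _ _ G _ d k hcard hdeg hk c c' hc hc'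
    rcases Nat.eq_zero_or_pos n with rfl | hn
    · have : IsEmpty V := Fintype.card_eq_zero_iff.mp hcard
      have : c = c' := funext fun x => isEmptyElim x
      rw [this]
    · -- V is nonempty; pick a vertex of degree ≤ d
      have hne : Finset.univ.Nonempty (α := V) := by
        rw [← Finset.card_pos, Finset.card_univ, hcard]; exact hn
      obtain ⟨v, _, hv⟩ := hdeg Finset.univ hne
      have hv' : (Finset.univ.filter (G.Adj v)).card ≤ d := hv
      -- induced subgraph on V minus v
      set G' := G.comap (Subtype.val : {w : V // w ≠ v} → V) with hG'
      have hdeg' : Degenerate G' d := degenerate_comap G hdeg v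
      have hcard' : Fintype.card {w : V // w ≠ v} = n - 1 := by
        have h1 : Fintype.card {w : V // w = v} = 1 := Fintype.card_subtype_eq v
        have := Fintype.card_subtype_compl (fun w : V => w = v)
        rw [h1, hcard] at this
        exact this
      have hmix' : IsMixing G' k :=
        ih (n - 1) (by omega) _ G' d k hcard' hdeg' hk
      -- restrictions are proper colourings of G'
      have hrc : IsProperColoring G' (fun w => c w.val) := fun a b hab => hc hab
      have hrc' : IsProperColoring G' (fun w => c' w.val) := fun a b hab => hc' hab
      have hchain := hmix' _ _ hrc hrc'
      obtain ⟨e', he', he'ext, hlift⟩ :=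
        lift_chain G hk v hv' hchain c hc (fun w => rfl)
      -- finish: e' agrees with c' off v; fix v if needed
      rcases eq_or_ne (e' v) (c' v) with hev | hev
      · have : e' = c' := by
          funext x
          rcases eq_or_ne x v with rfl | hx
          · exact hev
          · exact he'ext ⟨x, hx⟩
        rwa [this] at hlift
      · refine hlift.tail ⟨he', hc', v, hev, fun w hw => he'ext ⟨w, hw⟩⟩

/-- If `G` has degeneracy at most `d` and `k ≥ d + 2`, then `G` is `k`-mixing. -/
theorem degeneracy_implies_mixing {V : Type} [Fintype V] [DecidableEq V]
    (G : SimpleGraph V) [DecidableRel G.Adj] (d k : ℕ)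
    (hdeg : Degenerate G d) (hk : d + 2 ≤ k) : IsMixing G k :=
  aux_mixing (Fintype.card V) V G d k rfl hdeg hk
end

section
/- For any graph G with degeneracy d and any list assignment L with |L(v)| ≥ d + 2 for every vertex v, any two proper L-colourings of G can be transformed into one another by recolouring one vertex at a time (using colours from its list), maintaining a proper L-colouring throughout. -/
/-- `c` is a proper `L`-list-colouring of `G`. -/
def IsProperListColoring {V : Type} (G : SimpleGraph V) (L : V → Finset ℕ) (c : V → ℕ) : Prop :=
  (∀ v : V, c v ∈ L v) ∧ ∀ ⦃u v : V⦄, G.Adj u v → c u ≠ c v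

/-- A single-vertex list-recolouring step. -/
def ListRecolStep {V : Type} (G : SimpleGraph V) (L : V → Finset ℕ) (c c' : V → ℕ) : Prop :=
  IsProperListColoring G L c ∧ IsProperListColoring G L c' ∧
    ∃ v : V, c v ≠ c' v ∧ ∀ w : V, w ≠ v → c w = c' w

namespace ListMixAux

lemma proper_update {V : Type} [DecidableEq V] {G : SimpleGraph V} {L : V → Finset ℕ}
    {c : V → ℕ} (hc : IsProperListColoring G L c) (v : V) (a : ℕ) (ha : a ∈ L v)
    (hav : ∀ u, G.Adj v u → a ≠ c u) :
    IsProperListColoring G L (Function.update c v a) := by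
  constructor
  · intro w
    by_cases hw : w = v
    · subst hw; simpa using ha
    · rw [Function.update_of_ne hw]; exact hc.1 w
  · intro u w huw
    by_cases hu : u = v
    · subst hu
      have hwv : w ≠ u := (G.ne_of_adj huw).symm
      rw [Function.update_self, Function.update_of_ne hwv]
      exact hav w huw
    · by_cases hw : w = v
      · subst hw
        rw [Function.update_self, Function.update_of_ne hu]
        exact (hav u huw.symm).symm
      · rw [Function.update_of_ne hu, Function.update_of_ne hw]
        exact hc.2 huw

lemma step_update {V : Type} [DecidableEq V] {G : SimpleGraph V} {L : V → Finset ℕ}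
    {c : V → ℕ} (hc : IsProperListColoring G L c) (v : V) (a : ℕ) (ha : a ∈ L v)
    (hav : ∀ u, G.Adj v u → a ≠ c u) (hne : a ≠ c v) :
    ListRecolStep G L c (Function.update c v a) := by
  refine ⟨hc, proper_update hc v a ha hav, v, ?_, fun w hw => ?_⟩
  · rw [Function.update_self]; exact hne.symm
  · rw [Function.update_of_ne hw]

theorem aux (d : ℕ) : ∀ (n : ℕ) (V : Type) [Fintype V] [DecidableEq V]
    (G : SimpleGraph V) [DecidableRel G.Adj], Fintype.card V ≤ n → Degenerate G d →
    ∀ (L : V → Finset ℕ), (∀ v : V, d + 2 ≤ (L v).card) →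
    ∀ c c' : V → ℕ, IsProperListColoring G L c → IsProperListColoring G L c' →
    Relation.ReflTransGen (ListRecolStep G L) c c' := by
  intro n
  induction n with
  | zero =>
    intro V _ _ G _ hcard _ L _ c c' _ _
    have hVempty : IsEmpty V := Fintype.card_eq_zero_iff.mp (le_antisymm hcard (Nat.zero_le _))
    have : c = c' := funext fun v => (hVempty.false v).elim
    rw [this]
  | succ n ih =>
    intro V _ _ G _ hcard hdeg L hL c c' hc hc'
    rcases isEmpty_or_nonempty V with hV | hV
    · have : c = c' := funext fun v => (hV.false v).elim
      rw [this]
    · obtain ⟨v, -, hvdeg⟩ := hdeg Finset.univ Finset.univ_nonempty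
      -- the subtype graph
      set V' := {w : V // w ≠ v} with hV'
      let G' : SimpleGraph V' := SimpleGraph.comap Subtype.val G
      haveI : DecidableRel G'.Adj := fun a b => (by
        change Decidable (G.Adj a.1 b.1); infer_instance)
      have hcard' : Fintype.card V' ≤ n := by
        have hlt : Fintype.card V' < Fintype.card V :=
          Fintype.card_subtype_lt (x := v) (by simp)
        omega
      have hadj' : ∀ a b : V', G'.Adj a b ↔ G.Adj a.1 b.1 := fun a b => Iff.rfl
      have hdeg' : Degenerate G' d := by
        intro S' hS'
        obtain ⟨u, huS, hudeg⟩ := hdeg (S'.image Subtype.val)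
          (hS'.image _)
        obtain ⟨u', hu'S, rfl⟩ := Finset.mem_image.mp huS
        refine ⟨u', hu'S, ?_⟩
        calc (S'.filter (G'.Adj u')).card
            = ((S'.filter (G'.Adj u')).image Subtype.val).card := by
              rw [Finset.card_image_of_injective _ Subtype.val_injective]
          _ ≤ ((S'.image Subtype.val).filter (G.Adj u'.1)).card := by
              apply Finset.card_le_card
              intro x hx
              obtain ⟨y, hy, rfl⟩ := Finset.mem_image.mp hx
              rw [Finset.mem_filter] at hy ⊢
              exact ⟨Finset.mem_image_of_mem _ hy.1, hy.2⟩
          _ ≤ d := hudeg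
      let L' : V' → Finset ℕ := fun w => L w.1
      have hL' : ∀ w : V', d + 2 ≤ (L' w).card := fun w => hL w.1
      have hrestr : ∀ (c₁ : V → ℕ), IsProperListColoring G L c₁ →
          IsProperListColoring G' L' (fun w : V' => c₁ w.1) := by
        intro c₁ h1
        exact ⟨fun w => h1.1 w.1, fun a b hab => h1.2 hab⟩
      -- key lifting lemma for a single step
      have key : ∀ (b₂ : V' → ℕ) (c₁ : V → ℕ), IsProperListColoring G L c₁ →
          ListRecolStep G' L' (fun w : V' => c₁ w.1) b₂ →
          ∃ c₂ : V → ℕ, IsProperListColoring G L c₂ ∧ (∀ w : V', c₂ w.1 = b₂ w) ∧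
            Relation.ReflTransGen (ListRecolStep G L) c₁ c₂ := by
        intro b₂ c₁ h1 hstep
        obtain ⟨-, h2, w, hwne, hwe⟩ := hstep
        set a := b₂ w with ha
        have haL : a ∈ L w.1 := h2.1 w
        have hane : a ≠ c₁ w.1 := fun h => hwne h.symm
        -- colours of other (≠ v) neighbours of w differ from a
        have hother : ∀ u, G.Adj w.1 u → u ≠ v → a ≠ c₁ u := by
          intro u hadj huv h
          have hne' : (⟨u, huv⟩ : V') ≠ w := by
            intro hh
            exact (G.ne_of_adj hadj).symm (congrArg Subtype.val hh)
          have heq : b₂ (⟨u, huv⟩ : V') = c₁ u := (hwe _ hne').symm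
          exact (h2.2 (show G'.Adj w ⟨u, huv⟩ from hadj)) (by rw [heq]; exact h)
        by_cases hconf : G.Adj w.1 v ∧ c₁ v = a
        · -- conflict at v: first recolour v to a fresh colour β
          have hfresh : (L v \ ((Finset.univ.filter (G.Adj v)).image c₁ ∪ {a})).Nonempty := by
            rw [← Finset.card_pos]
            have h1' : ((Finset.univ.filter (G.Adj v)).image c₁ ∪ {a}).card ≤ d + 1 := by
              calc ((Finset.univ.filter (G.Adj v)).image c₁ ∪ {a}).card
                  ≤ ((Finset.univ.filter (G.Adj v)).image c₁).card + 1 := by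
                    simpa using Finset.card_union_le _ {a}
                _ ≤ (Finset.univ.filter (G.Adj v)).card + 1 := by
                    exact Nat.add_le_add_right (Finset.card_image_le) 1
                _ ≤ d + 1 := Nat.add_le_add_right hvdeg 1
            have := Finset.le_card_sdiff ((Finset.univ.filter (G.Adj v)).image c₁ ∪ {a}) (L v)
            have := hL v
            omega
          obtain ⟨β, hβ⟩ := hfresh
          rw [Finset.mem_sdiff, Finset.mem_union, Finset.mem_singleton] at hβ
          push_neg at hβ
          obtain ⟨hβL, hβim, hβa⟩ := hβ
          have hβnb : ∀ u, G.Adj v u → β ≠ c₁ u := by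
            intro u hadj h
            exact hβim (Finset.mem_image.mpr ⟨u, Finset.mem_filter.mpr ⟨Finset.mem_univ u, hadj⟩, h.symm⟩)
          have hβcv : β ≠ c₁ v := fun h => hβa (h.trans hconf.2)
          set cmid := Function.update c₁ v β with hcmid
          have hmidp : IsProperListColoring G L cmid := proper_update h1 v β hβL hβnb
          have hstep1 : ListRecolStep G L c₁ cmid := step_update h1 v β hβL hβnb hβcv
          -- now recolour w to a
          have hwa : ∀ u, G.Adj w.1 u → a ≠ cmid u := by
            intro u hadj
            by_cases huv : u = v
            · subst huv
              rw [hcmid, Function.update_self]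
              exact fun h => hβa h.symm
            · rw [hcmid, Function.update_of_ne huv]
              exact hother u hadj huv
          have hanemid : a ≠ cmid w.1 := by
            rw [hcmid, Function.update_of_ne w.2]; exact hane
          have hstep2 : ListRecolStep G L cmid (Function.update cmid w.1 a) :=
            step_update hmidp w.1 a haL hwa hanemid
          refine ⟨Function.update cmid w.1 a,
            proper_update hmidp w.1 a haL hwa, ?_, ?_⟩
          · intro w'
            by_cases hw' : w' = w
            · subst hw'; rw [Function.update_self]
            · have : w'.1 ≠ w.1 := fun h => hw' (Subtype.ext h)
              rw [Function.update_of_ne this, hcmid, Function.update_of_ne w'.2]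
              exact hwe w' hw'
          · exact Relation.ReflTransGen.head hstep1 (Relation.ReflTransGen.single hstep2)
        · -- no conflict: recolour w directly
          have hwa : ∀ u, G.Adj w.1 u → a ≠ c₁ u := by
            intro u hadj
            by_cases huv : u = v
            · subst huv
              exact fun h => hconf ⟨hadj, h.symm⟩
            · exact hother u hadj huv
          refine ⟨Function.update c₁ w.1 a, proper_update h1 w.1 a haL hwa, ?_,
            Relation.ReflTransGen.single (step_update h1 w.1 a haL hwa hane)⟩
          intro w'
          by_cases hw' : w' = w
          · subst hw'; rw [Function.update_self]
          · have : w'.1 ≠ w.1 := fun h => hw' (Subtype.ext h)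
            rw [Function.update_of_ne this]
            exact hwe w' hw'
      -- lift a whole restricted path
      have lift : ∀ (b : V' → ℕ),
          Relation.ReflTransGen (ListRecolStep G' L') b (fun w : V' => c' w.1) →
          ∀ c₁ : V → ℕ, IsProperListColoring G L c₁ → (∀ w : V', c₁ w.1 = b w) →
          ∃ c₂ : V → ℕ, IsProperListColoring G L c₂ ∧ (∀ w : V', c₂ w.1 = c' w.1) ∧
            Relation.ReflTransGen (ListRecolStep G L) c₁ c₂ := by
        intro b hb
        induction hb using Relation.ReflTransGen.head_induction_on with
        | refl =>
          intro c₁ h1 h2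
          exact ⟨c₁, h1, h2, Relation.ReflTransGen.refl⟩
        | @head b₁ b₂ hstep htail ihtail =>
          intro c₁ h1 h2
          have hb1 : (fun w : V' => c₁ w.1) = b₁ := funext h2
          obtain ⟨c₂', hp', hr', hrt'⟩ := key b₂ c₁ h1 (by rw [hb1]; exact hstep)
          obtain ⟨c₂, hp, hr, hrt⟩ := ihtail c₂' hp' hr'
          exact ⟨c₂, hp, hr, hrt'.trans hrt⟩
      have h0 : Relation.ReflTransGen (ListRecolStep G' L')
          (fun w : V' => c w.1) (fun w : V' => c' w.1) :=
        ih V' G' hcard' hdeg' L' hL' _ _ (hrestr c hc) (hrestr c' hc')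
      obtain ⟨c₂, hp2, hr2, hrt2⟩ := lift _ h0 c hc (fun _ => rfl)
      -- final adjustment at v
      by_cases hvfin : c₂ v = c' v
      · have : c₂ = c' := by
          funext u
          by_cases hu : u = v
          · subst hu; exact hvfin
          · exact hr2 ⟨u, hu⟩
        rw [← this]; exact hrt2
      · have hvnb : ∀ u, G.Adj v u → c' v ≠ c₂ u := by
          intro u hadj
          have huv : u ≠ v := (G.ne_of_adj hadj).symm
          rw [hr2 ⟨u, huv⟩]
          exact hc'.2 hadj
        have hstepf : ListRecolStep G L c₂ (Function.update c₂ v (c' v)) :=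
          step_update hp2 v (c' v) (hc'.1 v) hvnb (Ne.symm hvfin)
        have hfinal : Function.update c₂ v (c' v) = c' := by
          funext u
          by_cases hu : u = v
          · subst hu; rw [Function.update_self]
          · rw [Function.update_of_ne hu]; exact hr2 ⟨u, hu⟩
        rw [← hfinal]
        exact hrt2.trans (Relation.ReflTransGen.single hstepf)

end ListMixAux

/-- If `G` has degeneracy at most `d` and every list has at least `d + 2` colours, then
any two proper `L`-colourings are connected by single-vertex recolourings. -/
theorem list_degeneracy_mixing {V : Type} [Fintype V] [DecidableEq V]
    (G : SimpleGraph V) [DecidableRel G.Adj] (d : ℕ) (hdeg : Degenerate G d)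
    (L : V → Finset ℕ) (hL : ∀ v : V, d + 2 ≤ (L v).card)
    (c c' : V → ℕ) (hc : IsProperListColoring G L c) (hc' : IsProperListColoring G L c') :
    Relation.ReflTransGen (ListRecolStep G L) c c' :=
  ListMixAux.aux d (Fintype.card V) V G le_rfl hdeg L hL c c' hc hc'
end

section
/- If G is a connected bipartite graph, then for every k ≥ 2, any two proper k-colourings of G can be transformed into one another by a sequence of Kempe chain recolourings. -/
/-- Swap colours `a` and `b` on the set `S`. -/
noncomputable def kempeSwap {V : Type} {k : ℕ} (c : V → Fin k) (a b : Fin k) (S : Set V) :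
    V → Fin k := by
  classical
  exact fun v => if v ∈ S then (if c v = a then b else if c v = b then a else c v) else c v

/-- `S` is a Kempe chain of the colouring `c` for colours `a`, `b`: a connected
component of the subgraph induced on the vertices coloured `a` or `b`. -/
def IsKempeChain {V : Type} (G : SimpleGraph V) {k : ℕ} (c : V → Fin k) (a b : Fin k)
    (S : Set V) : Prop :=
  ∃ v₀ : V, (c v₀ = a ∨ c v₀ = b) ∧
    S = {v | Relation.ReflTransGen
          (fun x y => (c x = a ∨ c x = b) ∧ (c y = a ∨ c y = b) ∧ G.Adj x y) v₀ v}

/-- A Kempe chain recolouring step between proper `k`-colourings. -/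
def KempeStep {V : Type} (G : SimpleGraph V) {k : ℕ} (c c' : V → Fin k) : Prop :=
  IsProperColoring G c ∧ IsProperColoring G c' ∧
    ∃ (a b : Fin k) (S : Set V), a ≠ b ∧ IsKempeChain G c a b S ∧ c' = kempeSwap c a b S

/-- `G` is `k`-Kempe-mixing. -/
def IsKempeMixing {V : Type} (G : SimpleGraph V) (k : ℕ) : Prop :=
  ∀ c c' : V → Fin k, IsProperColoring G c → IsProperColoring G c' →
    Relation.ReflTransGen (KempeStep G) c c'

section Aux

variable {V : Type} {k : ℕ}

lemma kempeSwap_mem_a {c : V → Fin k} {a b : Fin k} {S : Set V} {v : V}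
    (hv : v ∈ S) (h : c v = a) : kempeSwap c a b S v = b := by
  simp [kempeSwap, hv, h]

lemma kempeSwap_mem_b {c : V → Fin k} {a b : Fin k} {S : Set V} {v : V}
    (hab : a ≠ b) (hv : v ∈ S) (h : c v = b) : kempeSwap c a b S v = a := by
  simp [kempeSwap, hv, h, hab.symm]

lemma kempeSwap_mem_other {c : V → Fin k} {a b : Fin k} {S : Set V} {v : V}
    (hv : v ∈ S) (h1 : c v ≠ a) (h2 : c v ≠ b) : kempeSwap c a b S v = c v := by
  simp [kempeSwap, hv, h1, h2]

lemma kempeSwap_not_mem {c : V → Fin k} {a b : Fin k} {S : Set V} {v : V}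
    (hv : v ∉ S) : kempeSwap c a b S v = c v := by
  simp [kempeSwap, hv]

lemma fin2_trans_aux : ∀ x y z : Fin 2, x ≠ y → y ≠ z → x = z := by decide

/-- Along a Kempe chain, colours are in `{a,b}`. -/
lemma chain_colors {G : SimpleGraph V} {c : V → Fin k} {a b : Fin k} {v₀ v : V}
    (h0 : c v₀ = a ∨ c v₀ = b)
    (h : Relation.ReflTransGen
      (fun x y => (c x = a ∨ c x = b) ∧ (c y = a ∨ c y = b) ∧ G.Adj x y) v₀ v) :
    c v = a ∨ c v = b := by
  induction h with
  | refl => exact h0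
  | tail _ hstep _ => exact hstep.2.1

/-- Alignment of a Kempe chain with a 2-colouring. -/
lemma chain_align {G : SimpleGraph V} {c : V → Fin k} (hc : IsProperColoring G c)
    {φ : V → Fin 2} (hφ : IsProperColoring G φ)
    {a b : Fin k} (hab : a ≠ b) {v₀ v : V} (h0 : c v₀ = a)
    (h : Relation.ReflTransGen
      (fun x y => (c x = a ∨ c x = b) ∧ (c y = a ∨ c y = b) ∧ G.Adj x y) v₀ v) :
    (c v = a ∧ φ v = φ v₀) ∨ (c v = b ∧ φ v ≠ φ v₀) := by
  induction h with
  | refl => exact Or.inl ⟨h0, rfl⟩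
  | @tail m w _ hstep ih =>
      obtain ⟨_, hcv, hadj⟩ := hstep
      have hne := hc hadj
      have hφne := hφ hadj
      rcases ih with ⟨hma, hφm⟩ | ⟨hmb, hφm⟩
      · have hcvb : c w = b := by
          rcases hcv with h | h
          · exact absurd (hma.trans h.symm) hne
          · exact h
        refine Or.inr ⟨hcvb, fun he => hφne ?_⟩
        rw [hφm, ← he]
      · have hcva : c w = a := by
          rcases hcv with h | h
          · exact h
          · exact absurd (hmb.trans h.symm) hne
        exact Or.inl ⟨hcva, fin2_trans_aux _ _ _ (fun he => hφne he.symm) hφm⟩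

/-- Kempe chains are closed under chain steps. -/
lemma chain_closed {G : SimpleGraph V} {c : V → Fin k} {a b : Fin k} {v₀ u w : V}
    (hu : Relation.ReflTransGen
      (fun x y => (c x = a ∨ c x = b) ∧ (c y = a ∨ c y = b) ∧ G.Adj x y) v₀ u)
    (hstep : (c u = a ∨ c u = b) ∧ (c w = a ∨ c w = b) ∧ G.Adj u w) :
    Relation.ReflTransGen
      (fun x y => (c x = a ∨ c x = b) ∧ (c y = a ∨ c y = b) ∧ G.Adj x y) v₀ w :=
  hu.tail hstep

/-- Swapping on a Kempe chain preserves properness. -/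
lemma kempeSwap_proper {G : SimpleGraph V} {c : V → Fin k} (hc : IsProperColoring G c)
    {a b : Fin k} {S : Set V} (hab : a ≠ b) (hchain : IsKempeChain G c a b S) :
    IsProperColoring G (kempeSwap c a b S) := by
  obtain ⟨v₀, hv₀, hS⟩ := hchain
  have hScol : ∀ v ∈ S, c v = a ∨ c v = b := by
    intro v hv; rw [hS] at hv; exact chain_colors hv₀ hv
  have hclosed : ∀ u ∈ S, ∀ w, (c w = a ∨ c w = b) → G.Adj u w → w ∈ S := by
    intro u hu w hw hadj
    rw [hS] at hu ⊢
    exact hu.tail ⟨hScol u (by rw [hS]; exact hu), hw, hadj⟩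
  intro u w hadj
  by_cases hu : u ∈ S <;> by_cases hw : w ∈ S
  · rcases hScol u hu with ha | hb <;> rcases hScol w hw with ha' | hb'
    · exact absurd (ha.trans ha'.symm) (hc hadj)
    · rw [kempeSwap_mem_a hu ha, kempeSwap_mem_b hab hw hb']; exact hab.symm
    · rw [kempeSwap_mem_b hab hu hb, kempeSwap_mem_a hw ha']; exact hab
    · exact absurd (hb.trans hb'.symm) (hc hadj)
  · have hwcol : ¬(c w = a ∨ c w = b) := fun h => hw (hclosed u hu w h hadj)
    push_neg at hwcol
    rw [kempeSwap_not_mem hw]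
    rcases hScol u hu with ha | hb
    · rw [kempeSwap_mem_a hu ha]; exact fun h => hwcol.2 h.symm
    · rw [kempeSwap_mem_b hab hu hb]; exact fun h => hwcol.1 h.symm
  · have hucol : ¬(c u = a ∨ c u = b) := fun h => hu (hclosed w hw u h hadj.symm)
    push_neg at hucol
    rw [kempeSwap_not_mem hu]
    rcases hScol w hw with ha | hb
    · rw [kempeSwap_mem_a hw ha]; exact hucol.2
    · rw [kempeSwap_mem_b hab hw hb]; exact hucol.1
  · rw [kempeSwap_not_mem hu, kempeSwap_not_mem hw]; exact hc hadj

/-- Kempe steps are symmetric. -/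
lemma kempeStep_symm {G : SimpleGraph V} {c c' : V → Fin k} (h : KempeStep G c c') :
    KempeStep G c' c := by
  obtain ⟨hc, hc', a, b, S, hab, ⟨v₀, hv₀, hS⟩, hsw⟩ := h
  have hval : ∀ x, (c' x = a ∨ c' x = b) ↔ (c x = a ∨ c x = b) := by
    intro x
    by_cases hx : x ∈ S
    · rcases eq_or_ne (c x) a with ha | ha
      · rw [hsw, kempeSwap_mem_a hx ha]; simp [ha]
      · rcases eq_or_ne (c x) b with hb | hb
        · rw [hsw, kempeSwap_mem_b hab hx hb]; simp [hb]
        · rw [hsw, kempeSwap_mem_other hx ha hb]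
    · rw [hsw, kempeSwap_not_mem hx]
  have hrel : ∀ x y, ((c' x = a ∨ c' x = b) ∧ (c' y = a ∨ c' y = b) ∧ G.Adj x y) ↔
      ((c x = a ∨ c x = b) ∧ (c y = a ∨ c y = b) ∧ G.Adj x y) := by
    intro x y; rw [hval x, hval y]
  refine ⟨hc', hc, a, b, S, hab, ⟨v₀, (hval v₀).mpr hv₀, ?_⟩, ?_⟩
  · rw [hS]
    ext v
    constructor <;> intro hv
    · exact Relation.ReflTransGen.mono (fun x y h => (hrel x y).mpr h) _ _ hv
    · exact Relation.ReflTransGen.mono (fun x y h => (hrel x y).mp h) _ _ hv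
  · funext x
    by_cases hx : x ∈ S
    · rcases eq_or_ne (c x) a with ha | ha
      · have : c' x = b := by rw [hsw]; exact kempeSwap_mem_a hx ha
        rw [kempeSwap_mem_b hab hx this, ha]
      · rcases eq_or_ne (c x) b with hb | hb
        · have : c' x = a := by rw [hsw]; exact kempeSwap_mem_b hab hx hb
          rw [kempeSwap_mem_a hx this, hb]
        · have : c' x = c x := by rw [hsw]; exact kempeSwap_mem_other hx ha hb
          rw [kempeSwap_mem_other hx (this ▸ ha) (this ▸ hb), this]
    · have : c' x = c x := by rw [hsw]; exact kempeSwap_not_mem hx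
      rw [kempeSwap_not_mem hx, this]

end Aux

/-- Every connected bipartite graph is `k`-Kempe-mixing for every `k ≥ 2`. -/
theorem bipartite_kempe_mixing {V : Type} [Fintype V] (G : SimpleGraph V)
    (hconn : G.Connected) (hbip : G.Colorable 2) (k : ℕ) (hk : 2 ≤ k) :
    IsKempeMixing G k := by
  intro c c' hc hc'
  classical
  obtain ⟨φ⟩ := hbip
  have hφ : IsProperColoring G (fun v => φ v) := fun u v h => φ.valid h
  set c₀ : V → Fin k := fun v => Fin.castLE hk (φ v) with hc₀def
  have hc₀ : IsProperColoring G c₀ := fun u v h hne =>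
    φ.valid h (Fin.castLE_injective hk hne)
  have key : ∀ n (c : V → Fin k), IsProperColoring G c →
      (Finset.univ.filter (fun v => c v ≠ c₀ v)).card ≤ n →
      Relation.ReflTransGen (KempeStep G) c c₀ := by
    intro n
    induction n with
    | zero =>
        intro c hc hcard
        have hempty : (Finset.univ.filter (fun v => c v ≠ c₀ v)) = ∅ :=
          Finset.card_eq_zero.mp (Nat.le_zero.mp hcard)
        have : c = c₀ := by
          funext v
          by_contra hne
          have : v ∈ (Finset.univ.filter (fun v => c v ≠ c₀ v)) := by
            simp [hne]
          rw [hempty] at this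
          exact absurd this (Finset.notMem_empty v)
        rw [this]
    | succ n ih =>
        intro c hc hcard
        by_cases hceq : c = c₀
        · rw [hceq]
        · have : ∃ v, c v ≠ c₀ v := by
            by_contra hno
            push_neg at hno
            exact hceq (funext hno)
          obtain ⟨v, hv⟩ := this
          set a := c v with hadef
          set b := c₀ v with hbdef
          have hab : a ≠ b := hv
          set S : Set V := {w | Relation.ReflTransGen
            (fun x y => (c x = a ∨ c x = b) ∧ (c y = a ∨ c y = b) ∧ G.Adj x y) v w} with hSdef
          have hchain : IsKempeChain G c a b S := ⟨v, Or.inl rfl, rfl⟩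
          set c' := kempeSwap c a b S with hc'def
          have hc' : IsProperColoring G c' := kempeSwap_proper hc hab hchain
          have hstep : KempeStep G c c' := ⟨hc, hc', a, b, S, hab, hchain, rfl⟩
          -- every vertex wrong in c' was wrong in c
          have hmono : ∀ w, c' w ≠ c₀ w → c w ≠ c₀ w := by
            intro w hw
            by_cases hwS : w ∈ S
            · rcases chain_align hc hφ hab rfl hwS with ⟨hwa, hwφ⟩ | ⟨hwb, hwφ⟩
              · exfalso
                apply hw
                rw [hc'def, kempeSwap_mem_a hwS hwa, hbdef, hc₀def]
                simp only
                rw [hwφ]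
              · intro he
                have hcc : c₀ w = c₀ v := by rw [← he, hwb, hbdef]
                exact hwφ (Fin.castLE_injective hk hcc)
            · rw [hc'def, kempeSwap_not_mem hwS] at hw
              exact hw
          have hvS : v ∈ S := Relation.ReflTransGen.refl
          have hvfixed : c' v = c₀ v := by
            rw [hc'def, kempeSwap_mem_a hvS rfl]
          have hsub : (Finset.univ.filter (fun w => c' w ≠ c₀ w)) ⊂
              (Finset.univ.filter (fun w => c w ≠ c₀ w)) := by
            constructor
            · intro w hw
              simp only [Finset.mem_filter, Finset.mem_univ, true_and] at hw ⊢
              exact hmono w hw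
            · intro hcon
              have hv1 : v ∈ (Finset.univ.filter (fun w => c w ≠ c₀ w)) := by simp; exact hv
              have hv2 := hcon hv1
              simp only [Finset.mem_filter, Finset.mem_univ, true_and] at hv2
              exact hv2 hvfixed
          have hcard' : (Finset.univ.filter (fun w => c' w ≠ c₀ w)).card ≤ n := by
            have := Finset.card_lt_card hsub
            omega
          exact Relation.ReflTransGen.head hstep (ih c' hc' hcard')
  have h1 := key _ c hc le_rfl
  have h2 := key _ c' hc' le_rfl
  have hsymm : Symmetric (Relation.ReflTransGen (KempeStep G (k := k))) :=
    by haveI : Std.Symm (KempeStep G (k := k)) := ⟨fun _ _ h => kempeStep_symm h⟩; exact fun x y h => Std.Symm.symm x y h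
  exact h1.trans (hsymm h2)
end

section
/- The 3-prism K_3 □ K_2 is not 3-Kempe-mixing: there exist two proper 3-colourings of the 3-prism such that no sequence of Kempe chain recolourings transforms one into the other. -/
/-- The 3-prism `K₃ □ K₂`. -/
def prismGraph : SimpleGraph (Fin 3 × Fin 2) :=
  (SimpleGraph.completeGraph (Fin 3)).boxProd (SimpleGraph.completeGraph (Fin 2))


instance : DecidableRel prismGraph.Adj := fun u v =>
  decidable_of_iff ((u.1 ≠ v.1 ∧ u.2 = v.2) ∨ (u.2 ≠ v.2 ∧ u.1 = v.1))
    (by simp [prismGraph, SimpleGraph.boxProd_adj, SimpleGraph.completeGraph, eq_comm])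

/-- The invariant: second triangle is the first shifted cyclically. -/
def PInv (d : Fin 3 × Fin 2 → Fin 3) : Prop :=
  d (0,1) = d (1,0) ∧ d (1,1) = d (2,0) ∧ d (2,1) = d (0,0)

lemma fin3_exhaust (x y z e : Fin 3) (hxy : x ≠ y) (hyz : y ≠ z) (hxz : x ≠ z) :
    e = x ∨ e = y ∨ e = z := by revert x y z e; decide

lemma kempe_preserves {d d' : Fin 3 × Fin 2 → Fin 3}
    (h : KempeStep prismGraph d d') (hP : PInv d) : PInv d' := by
  obtain ⟨hd, -, a, b, S, hab, ⟨v₀, hv₀, hSdef⟩, rfl⟩ := h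
  -- basic distinctness of colours on the bottom triangle
  have hxy : d (0,0) ≠ d (1,0) := hd (by decide)
  have hyz : d (1,0) ≠ d (2,0) := hd (by decide)
  have hxz : d (0,0) ≠ d (2,0) := hd (by decide)
  set R : (Fin 3 × Fin 2) → (Fin 3 × Fin 2) → Prop :=
    fun x y => (d x = a ∨ d x = b) ∧ (d y = a ∨ d y = b) ∧ prismGraph.Adj x y with hR
  have hRsymm : ∀ {x y}, R x y → R y x := fun ⟨h1, h2, h3⟩ => ⟨h2, h1, h3.symm⟩
  have hclosed : ∀ u w, R u w → (u ∈ S ↔ w ∈ S) := by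
    intro u w hr
    rw [hSdef]
    exact ⟨fun hu => Relation.ReflTransGen.tail hu hr,
           fun hw => Relation.ReflTransGen.tail hw (hRsymm hr)⟩
  -- two vertices of the same colour joined by a 2-path through the a/b subgraph
  -- are in S together
  have key : ∀ u m w : Fin 3 × Fin 2, d u = d w → (d u = a ∨ d u = b) →
      (d m = a ∨ d m = b) → prismGraph.Adj u m → prismGraph.Adj m w →
      (u ∈ S ↔ w ∈ S) := by
    intro u m w huw hu hm h1 h2
    exact (hclosed u m ⟨hu, hm, h1⟩).trans (hclosed m w ⟨hm, huw ▸ hu, h2⟩)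
  -- the generic pair lemma: u, w same colour, with two candidate middles m1 m2
  -- of the two other colours
  have connect : ∀ u w m1 m2 : Fin 3 × Fin 2, d u = d w →
      prismGraph.Adj u m1 → prismGraph.Adj m1 w →
      prismGraph.Adj u m2 → prismGraph.Adj m2 w →
      (∀ e : Fin 3, e ≠ d u → e = d m1 ∨ e = d m2) →
      kempeSwap d a b S u = kempeSwap d a b S w := by
    intro u w m1 m2 huw a1 b1 a2 b2 hcol
    by_cases hu : d u = a ∨ d u = b
    · -- the other colour of {a,b}
      have hmem : u ∈ S ↔ w ∈ S := by
        rcases hu with hua | hub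
        · have hb : b ≠ d u := fun h => hab (h.trans hua).symm
          rcases hcol b hb with hm | hm
          · exact key u m1 w huw (Or.inl hua) (Or.inr hm.symm) a1 b1
          · exact key u m2 w huw (Or.inl hua) (Or.inr hm.symm) a2 b2
        · have ha : a ≠ d u := fun h => hab (h.trans hub)
          rcases hcol a ha with hm | hm
          · exact key u m1 w huw (Or.inr hub) (Or.inl hm.symm) a1 b1
          · exact key u m2 w huw (Or.inr hub) (Or.inl hm.symm) a2 b2
      by_cases hus : u ∈ S
      · have hws : w ∈ S := hmem.mp hus
        simp [kempeSwap, hus, hws, huw]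
      · have hws : w ∉ S := fun h => hus (hmem.mpr h)
        simp [kempeSwap, hus, hws, huw]
    · push_neg at hu
      have hw1 : d w ≠ a := huw ▸ hu.1
      have hw2 : d w ≠ b := huw ▸ hu.2
      by_cases hus : u ∈ S <;> by_cases hws : w ∈ S <;>
        simp [kempeSwap, hus, hws, hu.1, hu.2, hw1, hw2, huw]
  obtain ⟨hP1, hP2, hP3⟩ := hP
  refine ⟨?_, ?_, ?_⟩
  · -- d(0,1) = d(1,0) = y ; middles (0,0) (colour x) and (1,1) (colour z)
    refine connect (0,1) (1,0) (0,0) (1,1) hP1 (by decide) (by decide) (by decide)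
      (by decide) ?_
    intro e he
    rw [hP1] at he
    rcases fin3_exhaust (d (0,0)) (d (1,0)) (d (2,0)) e hxy hyz hxz with h | h | h
    · exact Or.inl h
    · exact absurd h he
    · exact Or.inr (h.trans hP2.symm)
  · -- d(1,1) = d(2,0) = z ; middles (1,0) (colour y) and (2,1) (colour x)
    refine connect (1,1) (2,0) (1,0) (2,1) hP2 (by decide) (by decide) (by decide)
      (by decide) ?_
    intro e he
    rw [hP2] at he
    rcases fin3_exhaust (d (0,0)) (d (1,0)) (d (2,0)) e hxy hyz hxz with h | h | h
    · exact Or.inr (h.trans hP3.symm)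
    · exact Or.inl h
    · exact absurd h he
  · -- d(2,1) = d(0,0) = x ; middles (0,1) (colour y) and (2,0) (colour z)
    refine connect (2,1) (0,0) (0,1) (2,0) hP3 (by decide) (by decide) (by decide)
      (by decide) ?_
    intro e he
    rw [hP3] at he
    rcases fin3_exhaust (d (0,0)) (d (1,0)) (d (2,0)) e hxy hyz hxz with h | h | h
    · exact absurd h he
    · exact Or.inl (h.trans hP1.symm)
    · exact Or.inr h

lemma kempe_rtg_preserves {d d' : Fin 3 × Fin 2 → Fin 3}
    (h : Relation.ReflTransGen (KempeStep prismGraph) d d') (hP : PInv d) : PInv d' := by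
  induction h with
  | refl => exact hP
  | tail _ hstep ih => exact kempe_preserves hstep ih

/-- The 3-prism is not 3-Kempe-mixing. -/
theorem prism_not_three_kempe_mixing :
    ∃ c c' : Fin 3 × Fin 2 → Fin 3, IsProperColoring prismGraph c ∧
      IsProperColoring prismGraph c' ∧
      ¬ Relation.ReflTransGen (KempeStep prismGraph) c c' := by
  refine ⟨fun p => if p.2 = 0 then p.1 else p.1 + 1,
          fun p => if p.2 = 0 then p.1 else p.1 + 2,
          by unfold IsProperColoring; decide, by unfold IsProperColoring; decide, ?_⟩
  intro hrt
  have hP := kempe_rtg_preserves hrt ⟨by decide, by decide, by decide⟩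
  exact absurd hP.1 (by decide)
end

section
/- Let G be a connected graph on n vertices and let α, β be two placements of k identical tokens on distinct vertices of G (i.e., two k-subsets U and V of vertices). Then the minimum number of single-token moves along edges needed to transform α into β (where at most one token occupies each vertex at all times, but no stability constraint) equals the minimum over all bijections σ : U → V of the sum over u ∈ U of the graph distance from u to σ(u). -/
/-- A single token move: a token slides from `u` along an edge to an unoccupied
vertex `v`. -/
def TokenMove {V : Type} [DecidableEq V] (G : SimpleGraph V) (U U' : Finset V) : Prop :=
  ∃ u v : V, u ∈ U ∧ v ∉ U ∧ G.Adj u v ∧ U' = insert v (U.erase u)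
/-- `ReachN R n a b`: `b` is reachable from `a` in exactly `n` `R`-steps. -/
def ReachN {α : Type*} (R : α → α → Prop) : ℕ → α → α → Prop
  | 0, a, b => a = b
  | n + 1, a, c => ∃ b, R a b ∧ ReachN R n b c

namespace TokenProof

variable {V : Type} [Fintype V] [DecidableEq V] (G : SimpleGraph V)

/-- Cost of a matching. -/
noncomputable def cost {U W : Finset V} (σ : {x // x ∈ U} ≃ {x // x ∈ W}) : ℕ :=
  ∑ u : {x // x ∈ U}, G.dist u.1 (σ u).1

def costSet (U W : Finset V) : Set ℕ :=
  {m : ℕ | ∃ σ : {x // x ∈ U} ≃ {x // x ∈ W}, m = cost G σ}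

noncomputable def mcost (U W : Finset V) : ℕ := sInf (costSet G U W)

lemma costSet_nonempty {U W : Finset V} (h : U.card = W.card) :
    (costSet G U W).Nonempty :=
  ⟨_, Fintype.equivOfCardEq (by simp [Fintype.card_coe, h]), rfl⟩

lemma mcost_mem {U W : Finset V} (h : U.card = W.card) :
    mcost G U W ∈ costSet G U W :=
  Nat.sInf_mem (costSet_nonempty G h)

lemma mcost_le {U W : Finset V} (σ : {x // x ∈ U} ≃ {x // x ∈ W}) :
    mcost G U W ≤ cost G σ :=
  Nat.sInf_le ⟨σ, rfl⟩

lemma card_move {U U' : Finset V} (h : TokenMove G U U') : U'.card = U.card := by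
  obtain ⟨u, v, hu, hv, _, rfl⟩ := h
  have h1 : v ∉ U.erase u := fun hc => hv (Finset.mem_of_mem_erase hc)
  rw [Finset.card_insert_of_notMem h1, Finset.card_erase_of_mem hu]
  have : 1 ≤ U.card := Finset.card_pos.mpr ⟨u, hu⟩
  omega

/-- The bijection between `U` and `insert v (U.erase u)` sending `u` to `v`. -/
def moveEquiv {U : Finset V} {u v : V} (hu : u ∈ U) (hv : v ∉ U) :
    {x // x ∈ U} ≃ {x // x ∈ insert v (U.erase u)} where
  toFun x := if h : x.1 = u then ⟨v, Finset.mem_insert_self _ _⟩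
    else ⟨x.1, Finset.mem_insert_of_mem (Finset.mem_erase.2 ⟨h, x.2⟩)⟩
  invFun y := if h : y.1 = v then ⟨u, hu⟩
    else ⟨y.1, Finset.mem_of_mem_erase ((Finset.mem_insert.1 y.2).resolve_left h)⟩
  left_inv x := by
    by_cases h : x.1 = u
    · simp only [h, dif_pos, dif_pos rfl]
      exact Subtype.ext h.symm
    · have hx : x.1 ≠ v := fun hc => hv (hc ▸ x.2)
      simp only [dif_neg h, dif_neg hx]
  right_inv y := by
    by_cases h : y.1 = v
    · simp only [h, dif_pos, dif_pos rfl]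
      exact Subtype.ext h.symm
    · have hy : y.1 ≠ u :=
        (Finset.mem_erase.1 ((Finset.mem_insert.1 y.2).resolve_left h)).1
      simp only [dif_neg h, dif_neg hy]

lemma moveEquiv_apply {U : Finset V} {u v : V} (hu : u ∈ U) (hv : v ∉ U)
    (x : {x // x ∈ U}) :
    ((moveEquiv hu hv) x).1 = if x.1 = u then v else x.1 := by
  by_cases h : x.1 = u <;> simp [moveEquiv, h]

/-- Lower-bound step: one token move changes the matching cost by at most one. -/
lemma mcost_le_move {U U' W : Finset V} (hG : G.Connected)
    (h' : U'.card = W.card) (hm : TokenMove G U U') :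
    mcost G U W ≤ mcost G U' W + 1 := by
  obtain ⟨u, v, hu, hv, hadj, rfl⟩ := hm
  obtain ⟨σ', hσ'⟩ := mcost_mem G h'
  set e := moveEquiv hu hv with he
  have hle : cost G (e.trans σ') ≤ cost G σ' + 1 := by
    have h1 : ∀ x : {x // x ∈ U},
        G.dist x.1 (σ' (e x)).1 ≤ G.dist (e x).1 (σ' (e x)).1 +
          (if x = (⟨u, hu⟩ : {x // x ∈ U}) then 1 else 0) := by
      intro x
      by_cases h : x = (⟨u, hu⟩ : {x // x ∈ U})
      · have hx : x.1 = u := by rw [h]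
        have hev : (e x).1 = v := by rw [moveEquiv_apply, if_pos hx]
        rw [if_pos h, hev]
        have htri : G.dist x.1 (σ' (e x)).1 ≤
            G.dist x.1 v + G.dist v (σ' (e x)).1 := hG.dist_triangle
        have h1 : G.dist x.1 v = 1 :=
          SimpleGraph.dist_eq_one_iff_adj.mpr (hx ▸ hadj)
        omega
      · have hx : x.1 ≠ u := fun hc => h (Subtype.ext hc)
        have hev : (e x).1 = x.1 := by rw [moveEquiv_apply, if_neg hx]
        rw [if_neg h, hev]
        omega
    calc cost G (e.trans σ') = ∑ x : {x // x ∈ U}, G.dist x.1 (σ' (e x)).1 := rfl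
      _ ≤ ∑ x : {x // x ∈ U}, (G.dist (e x).1 (σ' (e x)).1 +
            (if x = (⟨u, hu⟩ : {x // x ∈ U}) then 1 else 0)) :=
          Finset.sum_le_sum fun x _ => h1 x
      _ = (∑ x : {x // x ∈ U}, G.dist (e x).1 (σ' (e x)).1) + 1 := by
          rw [Finset.sum_add_distrib, Finset.sum_ite_eq' Finset.univ
            (⟨u, hu⟩ : {x // x ∈ U}) (fun _ => 1)]
          simp
      _ = cost G σ' + 1 := by
          rw [Equiv.sum_comp e (fun y => G.dist y.1 (σ' y).1)]
          rfl
  have := mcost_le G (e.trans σ')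
  omega

/-- Moving a token one step along a geodesic towards its target decreases the
matching cost. -/
lemma mcost_move_le {U W : Finset V} (σ : {x // x ∈ U} ≃ {x // x ∈ W})
    (x : {y // y ∈ U}) {w : V} (hw : w ∉ U)
    (hd : G.dist w (σ x).1 + 1 = G.dist x.1 (σ x).1) :
    mcost G (insert w (U.erase x.1)) W + 1 ≤ cost G σ := by
  set e := moveEquiv x.2 hw with he
  have key : cost G (e.symm.trans σ) + 1 = cost G σ := by
    have hre : cost G (e.symm.trans σ) =
        ∑ z : {y // y ∈ U}, G.dist (e z).1 (σ z).1 := by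
      rw [show cost G (e.symm.trans σ) =
        ∑ y : {y // y ∈ insert w (U.erase x.1)}, G.dist y.1 (σ (e.symm y)).1 from rfl,
        ← Equiv.sum_comp e (fun y => G.dist y.1 (σ (e.symm y)).1)]
      exact Finset.sum_congr rfl fun z _ => by simp
    have h1 : ∀ z : {y // y ∈ U},
        G.dist (e z).1 (σ z).1 + (if z = x then 1 else 0) = G.dist z.1 (σ z).1 := by
      intro z
      by_cases h : z = x
      · subst h
        have hev : (e z).1 = w := by
          rw [moveEquiv_apply]; simp
        rw [if_pos rfl, hev, hd]
      · have hz : z.1 ≠ x.1 := fun hc => h (Subtype.ext hc)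
        have hev : (e z).1 = z.1 := by rw [moveEquiv_apply, if_neg hz]
        rw [if_neg h, hev]
        omega
    calc cost G (e.symm.trans σ) + 1
        = (∑ z : {y // y ∈ U}, G.dist (e z).1 (σ z).1) +
            ∑ z : {y // y ∈ U}, (if z = x then 1 else 0) := by
          rw [hre, Finset.sum_ite_eq' Finset.univ x (fun _ => 1)]
          simp
      _ = ∑ z : {y // y ∈ U}, (G.dist (e z).1 (σ z).1 + (if z = x then 1 else 0)) := by
          rw [Finset.sum_add_distrib]
      _ = cost G σ := Finset.sum_congr rfl fun z _ => h1 z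
  have hm : mcost G (insert w (U.erase x.1)) W ≤ cost G (e.symm.trans σ) :=
    mcost_le G _
  omega

lemma sum_pair_eq {α : Type*} [Fintype α] [DecidableEq α] (F H : α → ℕ) (a b : α)
    (hab : a ≠ b) (hFH : ∀ x, x ≠ a → x ≠ b → F x = H x)
    (h2 : F a + F b = H a + H b) : ∑ x, F x = ∑ x, H x := by
  have hb : b ∈ (Finset.univ : Finset α).erase a := Finset.mem_erase.2 ⟨hab.symm, Finset.mem_univ b⟩
  have hF1 : ∑ x ∈ ((Finset.univ : Finset α).erase a), F x
      = ∑ x ∈ (((Finset.univ : Finset α).erase a).erase b), F x + F b :=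
    (Finset.sum_erase_add _ _ hb).symm
  have hF0 : ∑ x, F x = ∑ x ∈ ((Finset.univ : Finset α).erase a), F x + F a :=
    (Finset.sum_erase_add _ _ (Finset.mem_univ a)).symm
  have hH1 : ∑ x ∈ ((Finset.univ : Finset α).erase a), H x
      = ∑ x ∈ (((Finset.univ : Finset α).erase a).erase b), H x + H b :=
    (Finset.sum_erase_add _ _ hb).symm
  have hH0 : ∑ x, H x = ∑ x ∈ ((Finset.univ : Finset α).erase a), H x + H a :=
    (Finset.sum_erase_add _ _ (Finset.mem_univ a)).symm
  have hcore : ∑ x ∈ (((Finset.univ : Finset α).erase a).erase b), F x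
      = ∑ x ∈ (((Finset.univ : Finset α).erase a).erase b), H x := by
    refine Finset.sum_congr rfl fun x hx => ?_
    have hxb : x ≠ b := (Finset.mem_erase.1 hx).1
    have hxa : x ≠ a := (Finset.mem_erase.1 (Finset.mem_erase.1 hx).2).1
    exact hFH x hxa hxb
  omega

/-- Swapping targets of two tokens, when the exchanged total is unchanged,
keeps the cost. -/
lemma cost_swap {U W : Finset V} (σ : {x // x ∈ U} ≃ {x // x ∈ W})
    (a b : {x // x ∈ U}) (hab : a ≠ b)
    (h : G.dist a.1 (σ b).1 + G.dist b.1 (σ a).1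
      = G.dist a.1 (σ a).1 + G.dist b.1 (σ b).1) :
    cost G ((Equiv.swap a b).trans σ) = cost G σ := by
  refine sum_pair_eq _ _ a b hab (fun x hxa hxb => ?_) ?_
  · simp [Equiv.swap_apply_of_ne_of_ne hxa hxb]
  · simpa [Equiv.swap_apply_left, Equiv.swap_apply_right] using h

lemma exists_step (hG : G.Connected) {u t : V} (h : u ≠ t) :
    ∃ w, G.Adj u w ∧ G.dist w t + 1 = G.dist u t := by
  obtain ⟨p, hp⟩ := hG.exists_walk_length_eq_dist u t
  cases p with
  | nil => exact absurd rfl h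
  | @cons _ w _ hadj q =>
    refine ⟨w, hadj, ?_⟩
    have h1 : G.dist w t ≤ q.length := SimpleGraph.dist_le q
    have h2 : G.dist u t ≤ G.dist u w + G.dist w t := hG.dist_triangle
    have h3 : G.dist u w = 1 := SimpleGraph.dist_eq_one_iff_adj.mpr hadj
    rw [SimpleGraph.Walk.length_cons] at hp
    omega

/-- Key lemma: if the matching cost is positive, there is a token move that
decreases it. -/
lemma exists_good_move {U W : Finset V} (hG : G.Connected) (hc : U.card = W.card)
    (hM : 1 ≤ mcost G U W) :
    ∃ U', TokenMove G U U' ∧ mcost G U' W + 1 ≤ mcost G U W := by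
  obtain ⟨σ0, hσ0⟩ := mcost_mem G hc
  suffices H : ∀ n (σ : {x // x ∈ U} ≃ {x // x ∈ W}), cost G σ = mcost G U W →
      (Finset.univ.filter (fun x : {x // x ∈ U} => (σ x).1 = x.1)).card ≤ n →
      ∃ U', TokenMove G U U' ∧ mcost G U' W + 1 ≤ mcost G U W by
    exact H _ σ0 hσ0.symm le_rfl
  intro n
  induction n using Nat.strong_induction_on with
  | _ n ih =>
  intro σ hcost hNf
  have hM1 : 1 ≤ cost G σ := by omega
  have hex : ∃ x : {x // x ∈ U}, (σ x).1 ≠ x.1 := by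
    by_contra hcon
    push_neg at hcon
    have : cost G σ = 0 := Finset.sum_eq_zero fun x _ => by
      rw [hcon x]; exact SimpleGraph.dist_self
    omega
  have hstep : ∀ x : {x // x ∈ U}, ∃ w : V, (σ x).1 ≠ x.1 →
      G.Adj x.1 w ∧ G.dist w (σ x).1 + 1 = G.dist x.1 (σ x).1 := by
    intro x
    by_cases h : (σ x).1 ≠ x.1
    · obtain ⟨w, hw⟩ := exists_step G hG (Ne.symm h)
      exact ⟨w, fun _ => hw⟩
    · exact ⟨x.1, fun h' => absurd h' h⟩
  choose wf hwf using hstep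
  by_cases hA : ∃ x : {x // x ∈ U}, (σ x).1 ≠ x.1 ∧ wf x ∉ U
  · obtain ⟨x, hx, hfree⟩ := hA
    refine ⟨insert (wf x) (U.erase x.1), ⟨x.1, wf x, x.2, hfree, (hwf x hx).1, rfl⟩, ?_⟩
    have := mcost_move_le G σ x hfree (hwf x hx).2
    omega
  push_neg at hA
  set g : {x // x ∈ U} → {x // x ∈ U} :=
    fun x => if h : (σ x).1 ≠ x.1 then ⟨wf x, hA x h⟩ else x with hg
  by_cases hB1 : ∃ a : {x // x ∈ U}, (σ a).1 ≠ a.1 ∧ (σ (g a)).1 = (g a).1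
  · -- a finished token blocks an unfinished one: swap targets, recurse
    obtain ⟨a, ha, hfin⟩ := hB1
    have hga : g a = ⟨wf a, hA a ha⟩ := dif_pos ha
    have hadj : G.Adj a.1 (g a).1 := by rw [hga]; exact (hwf a ha).1
    have hdb : G.dist (g a).1 (σ a).1 + 1 = G.dist a.1 (σ a).1 := by
      rw [hga]; exact (hwf a ha).2
    have hne1 : a.1 ≠ (g a).1 := hadj.ne
    have hne : a ≠ g a := fun hc => hne1 (by rw [← hc])
    have hd2 : 2 ≤ G.dist a.1 (σ a).1 := by
      by_contra hcon
      have h1 : 0 < G.dist a.1 (σ a).1 := hG.pos_dist_of_ne (Ne.symm ha)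
      have h0 : G.dist (g a).1 (σ a).1 = 0 := by omega
      have hba : (g a).1 = (σ a).1 := hG.dist_eq_zero_iff.mp h0
      have : σ (g a) = σ a := Subtype.ext (by rw [hfin, hba])
      exact hne (σ.injective this).symm
    set τ := (Equiv.swap a (g a)).trans σ with hτ
    have hd1 : G.dist a.1 (σ (g a)).1 = 1 := by
      rw [hfin]; exact SimpleGraph.dist_eq_one_iff_adj.mpr hadj
    have hdσb : G.dist (g a).1 (σ (g a)).1 = 0 := by
      rw [hfin]; exact SimpleGraph.dist_self
    have hcτ : cost G τ = cost G σ := by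
      refine cost_swap G σ a (g a) hne ?_
      omega
    have hτa : τ a = σ (g a) := by simp [hτ, Equiv.swap_apply_left]
    have hτb : τ (g a) = σ a := by simp [hτ, Equiv.swap_apply_right]
    have hbfilter : g a ∈ Finset.univ.filter
        (fun x : {x // x ∈ U} => (σ x).1 = x.1) := by
      simp [hfin]
    have hsub : Finset.univ.filter (fun x : {x // x ∈ U} => (τ x).1 = x.1)
        ⊆ (Finset.univ.filter (fun x : {x // x ∈ U} => (σ x).1 = x.1)).erase (g a) := by
      intro x hxmem
      have hxτ : (τ x).1 = x.1 := (Finset.mem_filter.1 hxmem).2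
      have hxb : x ≠ g a := by
        rintro rfl
        rw [hτb] at hxτ
        have h0 : G.dist (g a).1 (σ a).1 = 0 := by rw [hxτ]; exact SimpleGraph.dist_self
        omega
      have hxa : x ≠ a := by
        rintro rfl
        rw [hτa] at hxτ
        have h0 : G.dist x.1 (σ (g x)).1 = 0 := by rw [hxτ]; exact SimpleGraph.dist_self
        omega
      refine Finset.mem_erase.2 ⟨hxb, Finset.mem_filter.2 ⟨Finset.mem_univ _, ?_⟩⟩
      have : τ x = σ x := by simp [hτ, Equiv.swap_apply_of_ne_of_ne hxa hxb]
      rw [← this]; exact hxτ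
    have hlt : (Finset.univ.filter (fun x : {x // x ∈ U} => (τ x).1 = x.1)).card
        < (Finset.univ.filter (fun x : {x // x ∈ U} => (σ x).1 = x.1)).card := by
      calc (Finset.univ.filter (fun x : {x // x ∈ U} => (τ x).1 = x.1)).card
          ≤ ((Finset.univ.filter (fun x : {x // x ∈ U} => (σ x).1 = x.1)).erase (g a)).card :=
            Finset.card_le_card hsub
        _ < (Finset.univ.filter (fun x : {x // x ∈ U} => (σ x).1 = x.1)).card :=
            Finset.card_erase_lt_of_mem hbfilter
    exact ih _ (lt_of_lt_of_le hlt hNf) τ (hcτ.trans hcost) le_rfl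
  · -- every unfinished token is blocked by an unfinished token: impossible
    exfalso
    push_neg at hB1
    obtain ⟨u0, hu0⟩ := hex
    have hpres : ∀ x, (σ x).1 ≠ x.1 → (σ (g x)).1 ≠ (g x).1 := hB1
    have hiter : ∀ i, (σ (g^[i] u0)).1 ≠ (g^[i] u0).1 := by
      intro i
      induction i with
      | zero => exact hu0
      | succ i ihh => rw [Function.iterate_succ_apply']; exact hpres _ ihh
    have hpigeon : ∃ i j : ℕ, i < j ∧ g^[i] u0 = g^[j] u0 := by
      obtain ⟨i, j, hij, heq⟩ := Fintype.exists_ne_map_eq_of_card_lt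
        (fun i : Fin (Fintype.card {x // x ∈ U} + 1) => g^[i.1] u0) (by simp)
      rcases lt_or_gt_of_ne (fun hc : i.1 = j.1 => hij (Fin.ext hc)) with h | h
      · exact ⟨i.1, j.1, h, heq⟩
      · exact ⟨j.1, i.1, h, heq.symm⟩
    obtain ⟨i, j, hij, heq⟩ := hpigeon
    set t := j - i with htdef
    set y := g^[i] u0 with hydef
    have ht1 : 1 ≤ t := by omega
    have hty : g^[t] y = y := by
      rw [hydef, ← Function.iterate_add_apply]
      rw [show t + i = j by omega]
      exact heq.symm
    set O : Finset {x // x ∈ U} := (Finset.range t).image (fun m => g^[m] y) with hO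
    have hyO : y ∈ O := Finset.mem_image.2 ⟨0, Finset.mem_range.2 ht1, rfl⟩
    have hOunf : ∀ x ∈ O, (σ x).1 ≠ x.1 := by
      intro x hx
      obtain ⟨m, _, rfl⟩ := Finset.mem_image.1 hx
      rw [hydef, ← Function.iterate_add_apply]
      exact hiter _
    have hgO : ∀ x ∈ O, g x ∈ O := by
      intro x hx
      obtain ⟨m, hm, rfl⟩ := Finset.mem_image.1 hx
      have hrw : g (g^[m] y) = g^[m + 1] y := (Function.iterate_succ_apply' g m y).symm
      rw [hrw]
      have hm' := Finset.mem_range.1 hm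
      rcases Nat.lt_or_ge (m + 1) t with h | h
      · exact Finset.mem_image.2 ⟨m + 1, Finset.mem_range.2 h, rfl⟩
      · have : m + 1 = t := by omega
        rw [this, hty]
        exact hyO
    have hOiter : ∀ k, ∀ x ∈ O, g^[k] x ∈ O := by
      intro k
      induction k with
      | zero => intro x hx; exact hx
      | succ k ihh =>
        intro x hx
        rw [Function.iterate_succ_apply']
        exact hgO _ (ihh x hx)
    have hgt : ∀ x ∈ O, g^[t] x = x := by
      intro x hx
      obtain ⟨m, _, rfl⟩ := Finset.mem_image.1 hx
      rw [← Function.iterate_add_apply, Nat.add_comm, Function.iterate_add_apply, hty]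
    have hli : Function.LeftInverse
        (fun x => if x ∈ O then g^[t-1] x else x)
        (fun x => if x ∈ O then g x else x) := by
      intro x
      by_cases hx : x ∈ O
      · simp only [if_pos hx, if_pos (hgO x hx)]
        have h1 : g^[t-1] (g x) = g^[t-1+1] x := (Function.iterate_succ_apply g (t-1) x).symm
        rw [Nat.sub_add_cancel ht1] at h1
        rw [h1]
        exact hgt x hx
      · simp only [if_neg hx]
    have hri : Function.RightInverse
        (fun x => if x ∈ O then g^[t-1] x else x)
        (fun x => if x ∈ O then g x else x) := by
      intro x
      by_cases hx : x ∈ O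
      · simp only [if_pos hx, if_pos (hOiter (t-1) x hx)]
        have h1 : g (g^[t-1] x) = g^[t-1+1] x := (Function.iterate_succ_apply' g (t-1) x).symm
        rw [Nat.sub_add_cancel ht1] at h1
        rw [h1]
        exact hgt x hx
      · simp only [if_neg hx]
    set c : {x // x ∈ U} ≃ {x // x ∈ U} :=
      ⟨fun x => if x ∈ O then g x else x,
       fun x => if x ∈ O then g^[t-1] x else x, hli, hri⟩ with hcdef
    have hkey : cost G (c.symm.trans σ) < cost G σ := by
      have hre : cost G (c.symm.trans σ) =
          ∑ x : {x // x ∈ U}, G.dist (c x).1 (σ x).1 := by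
        rw [show cost G (c.symm.trans σ) =
          ∑ y : {x // x ∈ U}, G.dist y.1 (σ (c.symm y)).1 from rfl,
          ← Equiv.sum_comp c (fun y => G.dist y.1 (σ (c.symm y)).1)]
        exact Finset.sum_congr rfl fun z _ => by simp
      rw [hre]
      have hpt : ∀ x ∈ O, G.dist (c x).1 (σ x).1 < G.dist x.1 (σ x).1 := by
        intro x hx
        have hcx : c x = g x := by
          show (if x ∈ O then g x else x) = g x
          rw [if_pos hx]
        have hxu : (σ x).1 ≠ x.1 := hOunf x hx
        have hgx : g x = ⟨wf x, hA x hxu⟩ := dif_pos hxu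
        have := (hwf x hxu).2
        rw [hcx, hgx]
        show G.dist (wf x) (σ x).1 < G.dist x.1 (σ x).1
        omega
      refine Finset.sum_lt_sum (fun x _ => ?_) ⟨y, Finset.mem_univ y, hpt y hyO⟩
      by_cases hx : x ∈ O
      · exact le_of_lt (hpt x hx)
      · have hcx : c x = x := by
          show (if x ∈ O then g x else x) = x
          rw [if_neg hx]
        rw [hcx]
    have := mcost_le G (c.symm.trans σ)
    omega

/-- Achievability: the minimum matching cost is realized by a move sequence. -/
lemma reach (hG : G.Connected) (W : Finset V) :
    ∀ M (U : Finset V), U.card = W.card → mcost G U W = M →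
      ReachN (TokenMove G) M U W := by
  intro M
  induction M with
  | zero =>
    intro U hc h0
    obtain ⟨σ, hσ⟩ := mcost_mem G hc
    rw [h0] at hσ
    have hall : ∀ x : {x // x ∈ U}, G.dist x.1 (σ x).1 = 0 := by
      intro x
      have := (Finset.sum_eq_zero_iff.1 hσ.symm) x (Finset.mem_univ x)
      exact this
    have hsubset : U ⊆ W := by
      intro x hx
      have h := hall ⟨x, hx⟩
      have hre : x = (σ ⟨x, hx⟩).1 := hG.dist_eq_zero_iff.mp h
      rw [hre]
      exact (σ ⟨x, hx⟩).2
    have : U = W := Finset.eq_of_subset_of_card_le hsubset (le_of_eq hc.symm)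
    exact this
  | succ m ihm =>
    intro U hc hM
    have h1 : 1 ≤ mcost G U W := by omega
    obtain ⟨U', hmove, hle⟩ := exists_good_move G hG hc h1
    have hcard' : U'.card = W.card := (card_move G hmove).trans hc
    have hge : mcost G U W ≤ mcost G U' W + 1 := mcost_le_move G hG hcard' hmove
    have : mcost G U' W = m := by omega
    exact ⟨U', hmove, ihm U' hcard' this⟩

/-- Lower bound: any move sequence needs at least the matching cost. -/
lemma lower (hG : G.Connected) (W : Finset V) :
    ∀ n (U : Finset V), U.card = W.card → ReachN (TokenMove G) n U W →
      mcost G U W ≤ n := by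
  intro n
  induction n with
  | zero =>
    intro U hc h
    have hUW : U = W := h
    subst hUW
    have := mcost_le G (Equiv.refl {x // x ∈ U})
    have hz : cost G (Equiv.refl {x // x ∈ U}) = 0 :=
      Finset.sum_eq_zero fun x _ => SimpleGraph.dist_self
    omega
  | succ n ihn =>
    intro U hc h
    obtain ⟨U', hmove, hrest⟩ := h
    have hcard' : U'.card = W.card := (card_move G hmove).trans hc
    have := ihn U' hcard' hrest
    have := mcost_le_move G hG hcard' hmove
    omega

end TokenProof

/-- On a connected graph, the minimum number of token moves transforming one
placement of `k` identical tokens into another equals the minimum, over all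
bijections `σ` between the two occupied sets, of the total graph distance moved. -/
theorem token_moves_min_eq_min_matching {V : Type} [Fintype V] [DecidableEq V]
    (G : SimpleGraph V) (hG : G.Connected) (k : ℕ) (U W : Finset V)
    (hU : U.card = k) (hW : W.card = k) :
    IsLeast {n : ℕ | ReachN (TokenMove G) n U W}
      (sInf {m : ℕ | ∃ σ : {x // x ∈ U} ≃ {x // x ∈ W},
        m = ∑ u : {x // x ∈ U}, G.dist u.1 (σ u).1}) := by
  have hc : U.card = W.card := by rw [hU, hW]
  constructor
  · exact TokenProof.reach G hG W (TokenProof.mcost G U W) U hc rfl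
  · intro n hn
    exact TokenProof.lower G hG W n U hc hn
end

section
/- If G is a disconnected graph and k ≤ |V(G)|, then two configurations of k identical tokens on G (k-subsets of vertices) are connected by token slides along edges if and only if they place the same number of tokens on each connected component of G. In particular, for a connected graph G, any two k-subsets of V(G) with k < |V(G)| are connected by token slides. -/
namespace TokenAux

open Finset

variable {V : Type} [DecidableEq V] {G : SimpleGraph V}

lemma tokenMove_symm {U W : Finset V} (h : TokenMove G U W) : TokenMove G W U := by
  obtain ⟨u, v, hu, hv, hadj, rfl⟩ := h
  refine ⟨v, u, mem_insert_self _ _, ?_, hadj.symm, ?_⟩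
  · simp only [mem_insert, mem_erase]
    push_neg
    exact ⟨hadj.ne, fun h _ => h rfl⟩
  · rw [erase_insert (fun hv' => hv (mem_of_mem_erase hv')), insert_erase hu]

lemma reach_symm {U W : Finset V}
    (h : Relation.ReflTransGen (TokenMove G) U W) :
    Relation.ReflTransGen (TokenMove G) W U := by
  induction h with
  | refl => exact .refl
  | tail _ hstep ih => exact ((Relation.ReflTransGen.single (tokenMove_symm hstep)).trans ih)

lemma tokenMove_card {U W : Finset V} (h : TokenMove G U W) : W.card = U.card := by
  obtain ⟨u, v, hu, hv, _, rfl⟩ := h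
  have h1 : v ∉ U.erase u := fun h' => hv (mem_of_mem_erase h')
  rw [card_insert_of_notMem h1, card_erase_of_mem hu]
  have : 0 < U.card := card_pos.mpr ⟨u, hu⟩
  omega

open scoped Classical in
lemma tokenMove_count {U W : Finset V} (h : TokenMove G U W) (C : G.ConnectedComponent) :
    (W.filter fun v => G.connectedComponentMk v = C).card =
      (U.filter fun v => G.connectedComponentMk v = C).card := by
  obtain ⟨u, v, hu, hv, hadj, rfl⟩ := h
  have hmk : G.connectedComponentMk u = G.connectedComponentMk v :=
    SimpleGraph.ConnectedComponent.sound hadj.reachable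
  rw [filter_insert, filter_erase]
  by_cases hC : G.connectedComponentMk v = C
  · rw [if_pos hC]
    have huf : u ∈ U.filter fun x => G.connectedComponentMk x = C :=
      mem_filter.mpr ⟨hu, hmk.trans hC⟩
    have hvf : v ∉ (U.filter fun x => G.connectedComponentMk x = C).erase u :=
      fun h' => hv (mem_filter.mp (mem_of_mem_erase h')).1
    rw [card_insert_of_notMem hvf, card_erase_of_mem huf]
    have : 0 < (U.filter fun x => G.connectedComponentMk x = C).card :=
      card_pos.mpr ⟨u, huf⟩
    omega
  · rw [if_neg hC, erase_eq_of_notMem]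
    intro h'
    exact hC (hmk ▸ (mem_filter.mp h').2)

/-- Transfer a walk with support in `s` to the induced subgraph. -/
lemma walk_induce {s : Set V} :
    ∀ {a b : V} (p : G.Walk a b) (hp : ∀ x ∈ p.support, x ∈ s),
    (G.induce s).Reachable ⟨a, hp a p.start_mem_support⟩ ⟨b, hp b p.end_mem_support⟩ := by
  intro a b p
  induction p with
  | nil => intro hp; rfl
  | @cons a c b h q ih =>
    intro hp
    have hc : ∀ x ∈ q.support, x ∈ s := fun x hx =>
      hp x (by rw [SimpleGraph.Walk.support_cons]; exact List.mem_cons_of_mem _ hx)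
    have hadj : (G.induce s).Adj ⟨a, hp a (SimpleGraph.Walk.start_mem_support _)⟩
        ⟨c, hc c q.start_mem_support⟩ := h
    exact hadj.reachable.trans (ih hc)

/-- Lift token-sliding reachability from an induced subgraph, keeping a fixed set
`O` of tokens outside `s` in place. -/
lemma reach_lift (s : Set V) [DecidablePred (· ∈ s)] (O : Finset V)
    (hO : ∀ x ∈ O, x ∉ s) {A B : Finset s}
    (h : Relation.ReflTransGen (TokenMove (G.induce s)) A B) :
    Relation.ReflTransGen (TokenMove G)
      (O ∪ A.map (Function.Embedding.subtype _))
      (O ∪ B.map (Function.Embedding.subtype _)) := by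
  induction h with
  | refl => exact .refl
  | @tail b c _ hstep ih =>
    refine ih.tail ?_
    obtain ⟨u, v, hu, hv, hadj, rfl⟩ := hstep
    have huO : (u : V) ∉ O := fun h' => hO _ h' u.2
    have hvO : (v : V) ∉ O := fun h' => hO _ h' v.2
    refine ⟨(u : V), (v : V), ?_, ?_, hadj, ?_⟩
    · exact mem_union_right _ (mem_map_of_mem _ hu)
    · intro h'
      rcases mem_union.mp h' with h' | h'
      · exact hvO h'
      · obtain ⟨v', hv', hvv⟩ := mem_map.mp h'
        have : v' = v := Subtype.ext hvv
        exact hv (this ▸ hv')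
    · rw [map_insert, map_erase, erase_union_distrib, erase_eq_of_notMem huO,
        union_insert]
      rfl

open scoped Classical in
/-- The key step: move a token onto `t` without changing the number of tokens. -/
lemma reach_mem {G : SimpleGraph V} (hG : G.Preconnected) (t : V) :
    ∀ (n : ℕ) (U : Finset V), (∃ u ∈ U, G.dist u t ≤ n) →
    ∃ U', Relation.ReflTransGen (TokenMove G) U U' ∧ t ∈ U' ∧ U'.card = U.card := by
  intro n
  induction n with
  | zero =>
    intro U ⟨u, hu, hd⟩
    have : u = t := ((hG u t).dist_eq_zero_iff).mp (Nat.le_zero.mp hd)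
    exact ⟨U, .refl, this ▸ hu, rfl⟩
  | succ n ih =>
    intro U ⟨u₀, hu₀, hd₀⟩
    by_cases ht : t ∈ U
    · exact ⟨U, .refl, ht, rfl⟩
    · obtain ⟨u, hu, hmin⟩ := exists_min_image U (fun x => G.dist x t) ⟨u₀, hu₀⟩
      have hdu : G.dist u t ≤ n + 1 := le_trans (hmin u₀ hu₀) hd₀
      have hne : u ≠ t := fun h => ht (h ▸ hu)
      have hdpos : G.dist u t ≠ 0 := fun h => hne (((hG u t).dist_eq_zero_iff).mp h)
      obtain ⟨p, hp⟩ := (hG u t).exists_walk_length_eq_dist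
      cases p with
      | nil => exact absurd rfl hne
      | @cons _ c _ hadj q =>
        rw [SimpleGraph.Walk.length_cons] at hp
        have hdc : G.dist c t ≤ n := by
          have h1 : G.dist c t ≤ q.length := SimpleGraph.dist_le q
          have h2 : G.dist u t ≤ n + 1 := hdu
          omega
        have hcq : G.dist c t ≤ q.length := SimpleGraph.dist_le q
        have hcU : c ∉ U := by
          intro hc
          have h3 : G.dist u t ≤ G.dist c t := hmin c hc
          omega
        have hmove : TokenMove G U (insert c (U.erase u)) := ⟨u, c, hu, hcU, hadj, rfl⟩
        obtain ⟨U', hre, htU', hcard⟩ := ih (insert c (U.erase u))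
          ⟨c, mem_insert_self _ _, hdc⟩
        refine ⟨U', .head hmove hre, htU', ?_⟩
        rw [hcard, tokenMove_card hmove]

open scoped Classical in
/-- Any two equal-size token configurations on a connected graph with at least one free
vertex are connected by token slides. -/
lemma connected_main : ∀ (n : ℕ) (V : Type) [Fintype V] [DecidableEq V]
    (G : SimpleGraph V), Fintype.card V ≤ n → G.Connected →
    ∀ U W : Finset V, U.card = W.card → U.card < Fintype.card V →
    Relation.ReflTransGen (TokenMove G) U W := by
  intro n
  induction n with
  | zero =>
    intro V _ _ G hn _ U W _ hk
    omega
  | succ n ih =>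
    intro V _ _ G hn hG U W hUW hk
    by_cases hU0 : U = ∅
    · have hW0 : W = ∅ := card_eq_zero.mp (by rw [← hUW, hU0, card_empty])
      subst hU0; subst hW0; exact .refl
    obtain ⟨u₀, hu₀⟩ := nonempty_iff_ne_empty.mpr hU0
    have hVcard : 2 ≤ Fintype.card V := by
      have : 1 ≤ U.card := card_pos.mpr ⟨u₀, hu₀⟩
      omega
    -- pick a vertex farthest from a root; removing it keeps the graph connected
    have hVne : Nonempty V := ⟨u₀⟩
    obtain ⟨r⟩ := hVne
    obtain ⟨v, -, hvmax⟩ := exists_max_image Finset.univ (fun x => G.dist r x)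
      ⟨r, mem_univ r⟩
    have hvmax' : ∀ x, G.dist r x ≤ G.dist r v := fun x => hvmax x (mem_univ x)
    set s : Set V := {x | x ≠ v} with hs
    -- walks from r realizing distance avoid v (for targets ≠ v)
    have hrv : r ≠ v := by
      obtain ⟨x, hx⟩ := Fintype.exists_ne_of_one_lt_card (by omega) r
      have h1 : 0 < G.dist r x := by
        have := (hG.dist_eq_zero_iff (u := r) (v := x))
        rcases Nat.eq_zero_or_pos (G.dist r x) with h | h
        · exact absurd (this.mp h).symm hx
        · exact h
      have := hvmax' x
      intro hmm
      have h0 : G.dist r v = 0 := by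
        rw [hmm] at *
        exact (hG.dist_eq_zero_iff).mpr rfl
      omega
    have hwalkavoid : ∀ (w : V) (hw : w ≠ v),
        (G.induce s).Reachable ⟨r, hrv⟩ ⟨w, hw⟩ := by
      intro w hw
      obtain ⟨p, hp⟩ := (hG.preconnected r w).exists_walk_length_eq_dist
      have hvp : v ∉ p.support := by
        intro hvp
        have h1 := SimpleGraph.Walk.take_spec p hvp
        have h2 : (p.takeUntil v hvp).length + (p.dropUntil v hvp).length = p.length := by
          conv_rhs => rw [← h1]
          rw [SimpleGraph.Walk.length_append]
        have h3 : (p.dropUntil v hvp).length ≠ 0 := fun h =>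
          hw (SimpleGraph.Walk.eq_of_length_eq_zero h).symm
        have h4 : G.dist r v ≤ (p.takeUntil v hvp).length := SimpleGraph.dist_le _
        have h5 := hvmax' w
        omega
      have hsup : ∀ x ∈ p.support, x ∈ s := by
        intro x hx
        intro hxv
        exact hvp (hxv ▸ hx)
      exact walk_induce p hsup
    have hconn' : (G.induce s).Connected := by
      rw [SimpleGraph.connected_iff]
      constructor
      · rintro ⟨a, ha⟩ ⟨b, hb⟩
        exact ((hwalkavoid a ha).symm.trans (hwalkavoid b hb))
      · exact ⟨⟨r, hrv⟩⟩
    have hscard : Fintype.card s = Fintype.card V - 1 := by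
      have : Fintype.card s = Fintype.card {x : V // ¬ x = v} := by
        apply Fintype.card_congr
        exact Equiv.refl _
      rw [this, Fintype.card_subtype_compl, Fintype.card_subtype_eq]
    -- bring a token to v in both configurations
    obtain ⟨U₁, hUU₁, hvU₁, hcardU₁⟩ := reach_mem hG.preconnected v (G.dist u₀ v) U
      ⟨u₀, hu₀, le_refl _⟩
    obtain ⟨w₀, hw₀⟩ : W.Nonempty := card_pos.mp (hUW ▸ card_pos.mpr ⟨u₀, hu₀⟩)
    obtain ⟨W₁, hWW₁, hvW₁, hcardW₁⟩ := reach_mem hG.preconnected v (G.dist w₀ v) W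
      ⟨w₀, hw₀, le_refl _⟩
    -- recurse on the graph with v removed
    set A : Finset s := (U₁.erase v).subtype (· ∈ s) with hA
    set B : Finset s := (W₁.erase v).subtype (· ∈ s) with hB
    have hAmap : A.map (Function.Embedding.subtype _) = U₁.erase v :=
      subtype_map_of_mem (fun x hx => ne_of_mem_erase hx)
    have hBmap : B.map (Function.Embedding.subtype _) = W₁.erase v :=
      subtype_map_of_mem (fun x hx => ne_of_mem_erase hx)
    have hAcard : A.card = U.card - 1 := by
      have h := congrArg Finset.card hAmap
      rwa [card_map, card_erase_of_mem hvU₁, hcardU₁] at h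
    have hBcard : B.card = U.card - 1 := by
      have h := congrArg Finset.card hBmap
      rwa [card_map, card_erase_of_mem hvW₁, hcardW₁, ← hUW] at h
    have hUcard1 : 1 ≤ U.card := card_pos.mpr ⟨u₀, hu₀⟩
    have hreach' : Relation.ReflTransGen (TokenMove (G.induce s)) A B :=
      ih s (G.induce s) (by omega) hconn' A B (by rw [hAcard, hBcard]) (by omega)
    have hlift := reach_lift s ({v} : Finset V)
      (by intro x hx; rw [Finset.mem_singleton] at hx; subst hx; exact fun h => h rfl)
      hreach'
    rw [hAmap, hBmap, ← insert_eq, ← insert_eq, insert_erase hvU₁,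
      insert_erase hvW₁] at hlift
    exact (hUU₁.trans hlift).trans (reach_symm hWW₁)

open scoped Classical in
lemma assemble {V : Type} [Fintype V] [DecidableEq V] (G : SimpleGraph V) :
    ∀ (S : Finset G.ConnectedComponent) (U W : Finset V),
    (∀ C : G.ConnectedComponent,
      (U.filter fun v => G.connectedComponentMk v = C).card =
        (W.filter fun v => G.connectedComponentMk v = C).card) →
    (∀ v : V, G.connectedComponentMk v ∉ S → (v ∈ U ↔ v ∈ W)) →
    Relation.ReflTransGen (TokenMove G) U W := by
  intro S
  induction S using Finset.induction_on with
  | empty =>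
    intro U W _ hout
    have : U = W := Finset.ext fun v => hout v (notMem_empty _)
    exact this ▸ .refl
  | @insert C S hC ihS =>
    intro U W hcount hout
    set s : Set V := C.supp with hsdef
    have hmem_s : ∀ x : V, x ∈ s ↔ G.connectedComponentMk x = C := by
      intro x; rfl
    have hfilter_eq : ∀ X : Finset V,
        (X.filter fun v => G.connectedComponentMk v = C) = X.filter (· ∈ s) := by
      intro X
      apply Finset.filter_congr
      intro x _
      simp [hmem_s]
    -- the induced graph on the component is connected
    have hconnC : (G.induce s).Connected := by
      rw [SimpleGraph.connected_iff]
      constructor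
      · rintro ⟨a, ha⟩ ⟨b, hb⟩
        have hre : G.Reachable a b := by
          rw [hmem_s] at ha hb
          exact SimpleGraph.ConnectedComponent.exact (ha.trans hb.symm)
        obtain ⟨p⟩ := hre
        have hsup : ∀ x ∈ p.support, x ∈ s := by
          intro x hx
          rw [hmem_s]
          have : G.Reachable a x := ⟨p.takeUntil x hx⟩
          rw [hmem_s] at ha
          rw [← ha]
          exact (SimpleGraph.ConnectedComponent.sound this).symm
        exact walk_induce p hsup
      · obtain ⟨a, ha⟩ := C.exists_rep
        exact ⟨⟨a, (hmem_s a).mpr ha⟩⟩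
    set O : Finset V := U.filter (· ∉ s) with hO
    set A : Finset s := U.subtype (· ∈ s) with hA
    set B : Finset s := W.subtype (· ∈ s) with hB
    have hAmap : A.map (Function.Embedding.subtype _) = U.filter (· ∈ s) :=
      Finset.subtype_map _
    have hBmap : B.map (Function.Embedding.subtype _) = W.filter (· ∈ s) :=
      Finset.subtype_map _
    have hU_split : O ∪ A.map (Function.Embedding.subtype _) = U := by
      rw [hAmap, hO, union_comm]
      exact filter_union_filter_not_eq _ U
    have hAcard : A.card = (U.filter (· ∈ s)).card := by
      have h := congrArg Finset.card hAmap
      rwa [card_map] at h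
    have hBcard : B.card = (W.filter (· ∈ s)).card := by
      have h := congrArg Finset.card hBmap
      rwa [card_map] at h
    have hcount_s : (U.filter (· ∈ s)).card = (W.filter (· ∈ s)).card := by
      rw [← hfilter_eq U, ← hfilter_eq W]
      exact hcount C
    set U' : Finset V := O ∪ W.filter (· ∈ s) with hU'
    -- Reach from U to U'
    have hreach1 : Relation.ReflTransGen (TokenMove G) U U' := by
      by_cases hlt : (U.filter (· ∈ s)).card < Fintype.card s
      · have hAB : Relation.ReflTransGen (TokenMove (G.induce s)) A B :=
          connected_main (Fintype.card s) s (G.induce s) le_rfl hconnC A B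
            (by rw [hAcard, hBcard, hcount_s]) (by rw [hAcard]; exact hlt)
        have := reach_lift s O (by intro x hx; exact (mem_filter.mp hx).2) hAB
        rw [hU_split, hBmap] at this
        exact this
      · -- the component is fully occupied in both configurations
        push_neg at hlt
        have hcard_univ : Fintype.card s = (Finset.univ.filter (· ∈ s)).card := by
          rw [Fintype.card_subtype]
        rw [hcard_univ] at hlt
        have hUfull : U.filter (· ∈ s) = Finset.univ.filter (· ∈ s) :=
          eq_of_subset_of_card_le (filter_subset_filter _ (subset_univ U)) hlt
        have hWfull : W.filter (· ∈ s) = Finset.univ.filter (· ∈ s) :=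
          eq_of_subset_of_card_le (filter_subset_filter _ (subset_univ W))
            (by rw [← hcount_s]; exact hlt)
        have : U' = U := by
          rw [hU', hWfull, ← hUfull, hO, union_comm]
          exact filter_union_filter_not_eq _ U
        exact this ▸ .refl
    -- Reach from U' to W via the inductive hypothesis
    have hreach2 : Relation.ReflTransGen (TokenMove G) U' W := by
      apply ihS
      · intro C'
        by_cases hCC : C' = C
        · subst hCC
          rw [hfilter_eq U', hfilter_eq W, hU', filter_union]
          have h1 : O.filter (· ∈ s) = ∅ := by
            rw [hO, filter_filter]
            apply filter_false_of_mem
            intro x _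
            exact fun ⟨h1, h2⟩ => h1 h2
          have h2 : (W.filter (· ∈ s)).filter (· ∈ s) = W.filter (· ∈ s) := by
            rw [filter_filter]
            apply filter_congr
            intro x _
            simp only [and_self]
          rw [h1, h2, empty_union]
        · rw [hU', filter_union]
          have h1 : ((W.filter (· ∈ s)).filter fun v => G.connectedComponentMk v = C') =
              ∅ := by
            apply filter_false_of_mem
            intro x hx
            have := (mem_filter.mp hx).2
            rw [hmem_s] at this
            rw [this]
            exact fun h => hCC h.symm
          have h2 : (O.filter fun v => G.connectedComponentMk v = C') =
              U.filter fun v => G.connectedComponentMk v = C' := by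
            rw [hO, filter_filter]
            apply filter_congr
            intro x _
            simp only [hmem_s]
            constructor
            · exact fun h => h.2
            · intro h
              refine ⟨fun hxs => hCC ?_, h⟩
              rw [← h]
              exact (hmem_s x).mp hxs
          rw [h1, h2, union_empty]
          exact hcount C'
      · intro v hv
        by_cases hvC : G.connectedComponentMk v = C
        · have hvs : v ∈ s := (hmem_s v).mpr hvC
          constructor
          · intro hvU'
            rcases mem_union.mp hvU' with h | h
            · exact absurd hvs (mem_filter.mp h).2
            · exact (mem_filter.mp h).1
          · intro hvW
            exact mem_union_right _ (mem_filter.mpr ⟨hvW, hvs⟩)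
        · have hout' := hout v (by
            intro h
            rcases Finset.mem_insert.mp h with h | h
            · exact hvC h
            · exact hv h)
          have hvs : v ∉ s := fun h => hvC ((hmem_s v).mp h)
          constructor
          · intro hvU'
            rcases mem_union.mp hvU' with h | h
            · exact hout'.mp (mem_filter.mp h).1
            · exact absurd (mem_filter.mp h).2 hvs
          · intro hvW
            exact mem_union_left _ (mem_filter.mpr ⟨hout'.mpr hvW, hvs⟩)
    exact hreach1.trans hreach2

end TokenAux

open scoped Classical in
/-- For a disconnected graph, two placements of `k` identical tokens are connected by
token slides iff they put the same number of tokens on each connected component; for a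
connected graph, any two placements of `k < |V|` tokens are connected by token slides. -/
theorem token_reachability_components {V : Type} [Fintype V] [DecidableEq V]
    (G : SimpleGraph V) (k : ℕ) (hk : k ≤ Fintype.card V) :
    (¬ G.Connected → ∀ U W : Finset V, U.card = k → W.card = k →
      (Relation.ReflTransGen (TokenMove G) U W ↔
        ∀ C : G.ConnectedComponent,
          (U.filter fun v => G.connectedComponentMk v = C).card =
            (W.filter fun v => G.connectedComponentMk v = C).card)) ∧
    (G.Connected → k < Fintype.card V → ∀ U W : Finset V, U.card = k → W.card = k →
      Relation.ReflTransGen (TokenMove G) U W) := by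
  constructor
  · intro _ U W hU hW
    constructor
    · intro h
      clear hU hW hk
      intro C
      induction h with
      | refl => rfl
      | tail _ hstep ih => exact ih.trans (TokenAux.tokenMove_count hstep C).symm
    · intro h
      exact TokenAux.assemble G Finset.univ U W h
        (fun v hv => absurd (Finset.mem_univ _) hv)
  · intro hG hlt U W hU hW
    exact TokenAux.connected_main (Fintype.card V) V G le_rfl hG U W
      (hU.trans hW.symm) (hU ▸ hlt)
end

section
/- Let G be a connected weighted graph in which the edge weights are all distinct. Then G has a unique minimum spanning tree; consequently the minimum-spanning-tree reconfiguration graph (vertices: minimum spanning trees; edges: single edge exchanges) is trivially connected. More generally, for arbitrary positive edge weights, any minimum spanning tree of G can be transformed into any other by exchanging one edge at a time so that each intermediate tree is also a minimum spanning tree. -/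
open SimpleGraph
set_option linter.unusedSectionVars false

variable {V : Type} [Fintype V] [DecidableEq V]

/-- The graph of a finite edge set. -/
private abbrev gr (T : Finset (Sym2 V)) : SimpleGraph V :=
  SimpleGraph.fromEdgeSet (↑T : Set (Sym2 V))

private lemma gr_adj {T : Finset (Sym2 V)} {x y : V} :
    (gr T).Adj x y ↔ s(x, y) ∈ T ∧ x ≠ y := by
  simp [gr, fromEdgeSet_adj]

private lemma gr_sdiff (T : Finset (Sym2 V)) (e : Sym2 V) :
    gr T \ fromEdgeSet {e} = gr (T.erase e) := by
  ext x y
  simp only [sdiff_adj, gr_adj, fromEdgeSet_adj, Set.mem_singleton_iff, Finset.mem_coe, Finset.mem_erase]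
  tauto

/-- Walk replacement: deleting a non-bridge edge preserves reachability. -/
private lemma reach_of_reach {T : Finset (Sym2 V)} {e : Sym2 V} {v w : V}
    (hvw : e = s(v, w)) (h : (gr (T.erase e)).Reachable v w) {a b : V}
    (hab : (gr T).Reachable a b) : (gr (T.erase e)).Reachable a b := by
  obtain ⟨p⟩ := hab
  induction p with
  | nil => exact Reachable.refl _
  | @cons x y z hxy p ih =>
    refine Reachable.trans ?_ ih
    rw [gr_adj] at hxy
    by_cases hxe : s(x, y) = e
    · rw [hvw] at hxe
      rw [Sym2.eq_iff] at hxe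
      rcases hxe with ⟨rfl, rfl⟩ | ⟨rfl, rfl⟩
      · exact h
      · exact h.symm
    · exact Adj.reachable (gr_adj.mpr ⟨Finset.mem_erase.mpr ⟨hxe, hxy.1⟩, hxy.2⟩)

private lemma card_le_of_connected (E : Finset (Sym2 V)) :
    (gr E).Connected → Fintype.card V ≤ E.card + 1 := by
  induction E using Finset.strongInduction with
  | _ E ih =>
    intro h
    by_cases hb : ∀ e ∈ (gr E).edgeSet, (gr E).IsBridge e
    · have ht : (gr E).IsTree := ⟨h, isAcyclic_iff_forall_edge_isBridge.mpr hb⟩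
      haveI : Fintype (gr E).edgeSet := Fintype.ofFinset (E.filter (fun e => ¬ e.IsDiag)) (by
        intro e
        simp only [Finset.mem_filter, edgeSet_fromEdgeSet, Set.mem_diff, Finset.mem_coe,
          Set.mem_setOf_eq, Sym2.mem_diagSet])
      have hcard := ht.card_edgeFinset
      have hsub : (gr E).edgeFinset ⊆ E := by
        intro e he
        rw [mem_edgeFinset, edgeSet_fromEdgeSet] at he
        exact he.1
      have := Finset.card_le_card hsub
      omega
    · push_neg at hb
      obtain ⟨e, heE, hbr⟩ := hb
      have heE' : e ∈ E := by
        rw [edgeSet_fromEdgeSet] at heE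
        exact heE.1
      induction e using Sym2.ind with
      | _ v w =>
        have hadj : (gr E).Adj v w := heE
        have hreach : (gr E \ fromEdgeSet {s(v, w)}).Reachable v w := by
          by_contra hre
          exact hbr (isBridge_iff.mpr hre)
        rw [gr_sdiff] at hreach
        have hconn' : (gr (E.erase s(v, w))).Connected := by
          rw [connected_iff]
          exact ⟨fun a b => reach_of_reach rfl hreach (h.preconnected a b), h.nonempty⟩
        have hlt := ih (E.erase s(v, w)) (Finset.erase_ssubset heE') hconn'
        have := Finset.card_erase_of_mem heE'
        omega

private lemma isTree_of_card (E : Finset (Sym2 V)) (h : (gr E).Connected)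
    (hc : E.card + 1 = Fintype.card V) : (gr E).IsTree := by
  by_cases hb : ∀ e ∈ (gr E).edgeSet, (gr E).IsBridge e
  · exact ⟨h, isAcyclic_iff_forall_edge_isBridge.mpr hb⟩
  · exfalso
    push_neg at hb
    obtain ⟨e, heE, hbr⟩ := hb
    have heE' : e ∈ E := by
      rw [edgeSet_fromEdgeSet] at heE
      exact heE.1
    induction e using Sym2.ind with
    | _ v w =>
      have hadj : (gr E).Adj v w := heE
      have hreach : (gr E \ fromEdgeSet {s(v, w)}).Reachable v w := by
        by_contra hre
        exact hbr (isBridge_iff.mpr hre)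
      rw [gr_sdiff] at hreach
      have hconn' : (gr (E.erase s(v, w))).Connected := by
        rw [connected_iff]
        exact ⟨fun a b => reach_of_reach rfl hreach (h.preconnected a b), h.nonempty⟩
      have hlt := card_le_of_connected _ hconn'
      have := Finset.card_erase_of_mem heE'
      have hpos : 0 < Fintype.card V := Fintype.card_pos_iff.mpr h.nonempty
      have hE1 : 0 < E.card := Finset.card_pos.mpr ⟨_, heE'⟩
      omega

private lemma cover_step {T : Finset (Sym2 V)} {a b : V} :
    ∀ {u v : V}, (gr T).Walk u v →
      ((gr (T.erase s(a, b))).Reachable a u ∨ (gr (T.erase s(a, b))).Reachable b u) →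
      ((gr (T.erase s(a, b))).Reachable a v ∨ (gr (T.erase s(a, b))).Reachable b v) := by
  intro u v p
  induction p with
  | nil => exact id
  | @cons x y z hxy p ih =>
    intro hu
    apply ih
    by_cases hxe : s(x, y) = s(a, b)
    · rw [Sym2.eq_iff] at hxe
      rcases hxe with ⟨rfl, rfl⟩ | ⟨rfl, rfl⟩
      · right; exact Reachable.refl _
      · left; exact Reachable.refl _
    · rw [gr_adj] at hxy
      have hadj : (gr (T.erase s(a, b))).Adj x y :=
        gr_adj.mpr ⟨Finset.mem_erase.mpr ⟨hxe, hxy.1⟩, hxy.2⟩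
      rcases hu with h | h
      · left; exact h.trans hadj.reachable
      · right; exact h.trans hadj.reachable

private lemma cover {T : Finset (Sym2 V)} {a b : V} (hc : (gr T).Connected) (v : V) :
    (gr (T.erase s(a, b))).Reachable a v ∨ (gr (T.erase s(a, b))).Reachable b v :=
  cover_step (hc.preconnected a v).some (Or.inl (Reachable.refl a))

private lemma not_reach_erase {T : Finset (Sym2 V)} (ht : (gr T).IsTree) {a b : V}
    (hab : (gr T).Adj a b) : ¬ (gr (T.erase s(a, b))).Reachable a b := by
  have h := isAcyclic_iff_forall_adj_isBridge.mp ht.2 hab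
  rw [isBridge_iff, deleteEdges, gr_sdiff] at h
  exact h

private lemma crossing {T' : Finset (Sym2 V)} (A : V → Prop) :
    ∀ {u v : V} (p : (gr T').Walk u v), p.IsPath → A u → ¬ A v →
      ∃ x y : V, A x ∧ ¬ A y ∧ s(x, y) ∈ T' ∧ x ≠ y ∧ s(x, y) ∈ p.edges ∧
        (gr (T'.erase s(x, y))).Reachable u x ∧ (gr (T'.erase s(x, y))).Reachable y v := by
  intro u v p
  induction p with
  | nil => intro _ hu hv; exact absurd hu hv
  | @cons x c z hxc p ih =>
    intro hp hu hv
    rw [Walk.cons_isPath_iff] at hp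
    obtain ⟨hp', hxs⟩ := hp
    rw [gr_adj] at hxc
    by_cases hAc : A c
    · obtain ⟨x', y', hA, hnA, hmem, hne, hpe, hru, hrv⟩ := ih hp' hAc hv
      have hnex : s(x, c) ≠ s(x', y') := by
        intro hcontra
        exact hxs (p.fst_mem_support_of_mem_edges (hcontra ▸ hpe))
      have hadj : (gr (T'.erase s(x', y'))).Adj x c :=
        gr_adj.mpr ⟨Finset.mem_erase.mpr ⟨hnex, hxc.1⟩, hxc.2⟩
      exact ⟨x', y', hA, hnA, hmem, hne, List.mem_cons_of_mem _ hpe,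
        hadj.reachable.trans hru, hrv⟩
    · refine ⟨x, c, hu, hAc, hxc.1, hxc.2, List.mem_cons_self, Reachable.refl _, ?_⟩
      refine ⟨p.transfer _ fun e he => ?_⟩
      have h1 := p.edges_subset_edgeSet he
      rw [edgeSet_fromEdgeSet] at h1 ⊢
      refine ⟨Finset.mem_coe.mpr (Finset.mem_erase.mpr ⟨?_, Finset.mem_coe.mp h1.1⟩), h1.2⟩
      intro hcontra
      exact hxs (p.fst_mem_support_of_mem_edges (hcontra ▸ he))

/-- `T` is (the edge set of) a spanning tree of `G`. -/
def IsSpanningTree {V : Type} [Fintype V] (G : SimpleGraph V) (T : Finset (Sym2 V)) : Prop :=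
  ↑T ⊆ G.edgeSet ∧ (SimpleGraph.fromEdgeSet (↑T : Set (Sym2 V))).IsTree

private lemma spanning_card {G : SimpleGraph V} {T : Finset (Sym2 V)}
    (h : IsSpanningTree G T) : T.card + 1 = Fintype.card V := by
  haveI : Fintype (gr T).edgeSet := Fintype.ofFinset (T.filter (fun e => ¬ e.IsDiag)) (by
    intro e
    simp only [Finset.mem_filter, edgeSet_fromEdgeSet, Set.mem_diff, Finset.mem_coe,
      Set.mem_setOf_eq, Sym2.mem_diagSet])
  have hc := h.2.card_edgeFinset
  have heq : (gr T).edgeFinset = T := by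
    ext e
    rw [mem_edgeFinset, edgeSet_fromEdgeSet]
    constructor
    · exact fun he => he.1
    · intro he
      exact ⟨he, G.not_isDiag_of_mem_edgeSet (h.1 he)⟩
  rwa [heq] at hc

private lemma exchange {G : SimpleGraph V} {T T' : Finset (Sym2 V)}
    (hT : IsSpanningTree G T) (hT' : IsSpanningTree G T') {e : Sym2 V}
    (he : e ∈ T) (he' : e ∉ T') :
    ∃ f ∈ T', f ∉ T ∧ IsSpanningTree G (insert f (T.erase e)) ∧
      IsSpanningTree G (insert e (T'.erase f)) := by
  induction e using Sym2.ind with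
  | _ a b =>
    have hab : a ≠ b := by
      have := G.not_isDiag_of_mem_edgeSet (hT.1 (Finset.mem_coe.mpr he))
      simpa using this
    set K := gr (T.erase s(a, b)) with hK
    have hAa : K.Reachable a a := Reachable.refl a
    have hAb : ¬ K.Reachable a b := not_reach_erase hT.2 (gr_adj.mpr ⟨he, hab⟩)
    obtain ⟨p0⟩ := hT'.2.1.preconnected a b
    obtain ⟨x, y, hAx, hAy, hfT', hxy, hpe, hrax, hryb⟩ :=
      crossing (fun v => K.Reachable a v) p0.toPath.1 p0.toPath.2 hAa hAb
    have hfT : s(x, y) ∉ T := by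
      intro hf
      by_cases hfe : s(x, y) = s(a, b)
      · rw [Sym2.eq_iff] at hfe
        rcases hfe with ⟨rfl, rfl⟩ | ⟨rfl, rfl⟩
        · exact he' hfT'
        · exact hAb hAx
      · have hadj : K.Adj x y := gr_adj.mpr ⟨Finset.mem_erase.mpr ⟨hfe, hf⟩, hxy⟩
        exact hAy (hAx.trans hadj.reachable)
    have hcardT := spanning_card hT
    have hcardT' := spanning_card hT'
    have hTpos : 0 < T.card := Finset.card_pos.mpr ⟨_, he⟩
    have hT'pos : 0 < T'.card := Finset.card_pos.mpr ⟨_, hfT'⟩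
    have hfne : s(x, y) ∉ T.erase s(a, b) := fun hc => hfT (Finset.mem_of_mem_erase hc)
    have hene : s(a, b) ∉ T'.erase s(x, y) := fun hc => he' (Finset.mem_of_mem_erase hc)
    refine ⟨s(x, y), hfT', hfT, ?_, ?_⟩
    · -- insert s(x,y) (T.erase s(a,b)) is a spanning tree
      have hsub : ↑(insert s(x, y) (T.erase s(a, b))) ⊆ G.edgeSet := by
        intro g hg
        rcases Finset.mem_insert.mp hg with rfl | hg'
        · exact hT'.1 hfT'
        · exact hT.1 (Finset.mem_of_mem_erase hg')
      have hmono : K ≤ gr (insert s(x, y) (T.erase s(a, b))) :=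
        fromEdgeSet_mono (by exact_mod_cast Finset.subset_insert _ _)
      have hadjxy : (gr (insert s(x, y) (T.erase s(a, b)))).Adj x y :=
        gr_adj.mpr ⟨Finset.mem_insert_self _ _, hxy⟩
      have hreach : ∀ v, (gr (insert s(x, y) (T.erase s(a, b)))).Reachable x v := by
        intro v
        rcases cover (a := a) (b := b) hT.2.1 v with h | h
        · exact (hAx.symm.trans h).mono hmono
        · have hKby : K.Reachable b y := (cover (a := a) (b := b) hT.2.1 y).resolve_left hAy
          exact hadjxy.reachable.trans ((hKby.symm.mono hmono).trans (h.mono hmono))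
      have hconn : (gr (insert s(x, y) (T.erase s(a, b)))).Connected := by
        rw [connected_iff]
        exact ⟨fun u v => ((hreach u).symm.trans (hreach v)), ⟨a⟩⟩
      have hcard : (insert s(x, y) (T.erase s(a, b))).card + 1 = Fintype.card V := by
        rw [Finset.card_insert_of_notMem hfne, Finset.card_erase_of_mem he]
        omega
      exact ⟨hsub, isTree_of_card _ hconn hcard⟩
    · -- insert s(a,b) (T'.erase s(x,y)) is a spanning tree
      set K' := gr (T'.erase s(x, y)) with hK'
      have hsub : ↑(insert s(a, b) (T'.erase s(x, y))) ⊆ G.edgeSet := by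
        intro g hg
        rcases Finset.mem_insert.mp hg with rfl | hg'
        · exact hT.1 (Finset.mem_coe.mpr he)
        · exact hT'.1 (Finset.mem_of_mem_erase hg')
      have hmono : K' ≤ gr (insert s(a, b) (T'.erase s(x, y))) :=
        fromEdgeSet_mono (by exact_mod_cast Finset.subset_insert _ _)
      have hadjab : (gr (insert s(a, b) (T'.erase s(x, y)))).Adj a b :=
        gr_adj.mpr ⟨Finset.mem_insert_self _ _, hab⟩
      have hreach : ∀ v, (gr (insert s(a, b) (T'.erase s(x, y)))).Reachable a v := by
        intro v
        rcases cover (a := x) (b := y) hT'.2.1 v with h | h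
        · exact (hrax.trans h).mono hmono
        · exact hadjab.reachable.trans ((hryb.symm.symm.mono hmono).symm.trans (h.mono hmono)).symm.symm
      have hconn : (gr (insert s(a, b) (T'.erase s(x, y)))).Connected := by
        rw [connected_iff]
        exact ⟨fun u v => ((hreach u).symm.trans (hreach v)), ⟨a⟩⟩
      have hcard : (insert s(a, b) (T'.erase s(x, y))).card + 1 = Fintype.card V := by
        rw [Finset.card_insert_of_notMem hene, Finset.card_erase_of_mem hfT']
        omega
      exact ⟨hsub, isTree_of_card _ hconn hcard⟩

/-- `T` is a minimum spanning tree of `G` with respect to the weights `w`. -/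
def IsMST {V : Type} [Fintype V] (G : SimpleGraph V) (w : Sym2 V → ℝ)
    (T : Finset (Sym2 V)) : Prop :=
  IsSpanningTree G T ∧ ∀ T' : Finset (Sym2 V), IsSpanningTree G T' →
    ∑ e ∈ T, w e ≤ ∑ e ∈ T', w e

/-- A single edge exchange between minimum spanning trees. -/
def MSTExchangeStep {V : Type} [Fintype V] [DecidableEq V] (G : SimpleGraph V)
    (w : Sym2 V → ℝ) (T T' : Finset (Sym2 V)) : Prop :=
  IsMST G w T ∧ IsMST G w T' ∧
    ∃ e f : Sym2 V, e ∈ T ∧ f ∉ T ∧ T' = insert f (T.erase e)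

/-- The weight bookkeeping for an exchange between two MSTs. -/
private lemma exchange_weights {G : SimpleGraph V} {w : Sym2 V → ℝ} {T T' : Finset (Sym2 V)}
    (hT : IsMST G w T) (hT' : IsMST G w T') {e : Sym2 V} (he : e ∈ T) (he' : e ∉ T') :
    ∃ f ∈ T', f ∉ T ∧ w e = w f ∧ IsMST G w (insert f (T.erase e)) := by
  obtain ⟨f, hfT', hfT, h1, h2⟩ := exchange hT.1 hT'.1 he he'
  have hfne : f ∉ T.erase e := fun hc => hfT (Finset.mem_of_mem_erase hc)
  have hene : e ∉ T'.erase f := fun hc => he' (Finset.mem_of_mem_erase hc)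
  have s1 := hT.2 _ h1
  have s2 := hT'.2 _ h2
  rw [Finset.sum_insert hfne, Finset.sum_erase_eq_sub he] at s1
  rw [Finset.sum_insert hene, Finset.sum_erase_eq_sub hfT'] at s2
  have hwe : w e = w f := le_antisymm (by linarith) (by linarith)
  have hsum : ∑ g ∈ insert f (T.erase e), w g = ∑ g ∈ T, w g := by
    rw [Finset.sum_insert hfne, Finset.sum_erase_eq_sub he]
    linarith
  exact ⟨f, hfT', hfT, hwe, h1, fun S hS => by rw [hsum]; exact hT.2 S hS⟩

/-- Distinct weights give a unique MST; and for arbitrary positive weights any MST can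
be transformed into any other by single edge exchanges through MSTs. -/
theorem mst_unique_and_reconfiguration {V : Type} [Fintype V] [DecidableEq V]
    (G : SimpleGraph V) (hG : G.Connected) :
    (∀ w : Sym2 V → ℝ, Set.InjOn w G.edgeSet →
      ∀ T T' : Finset (Sym2 V), IsMST G w T → IsMST G w T' → T = T') ∧
    (∀ w : Sym2 V → ℝ, (∀ e ∈ G.edgeSet, 0 < w e) →
      ∀ T T' : Finset (Sym2 V), IsMST G w T → IsMST G w T' →
        Relation.ReflTransGen (MSTExchangeStep G w) T T') := by
  constructor
  · intro w hw T T' hT hT'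
    by_contra hne
    have hc1 := spanning_card hT.1
    have hc2 := spanning_card hT'.1
    have hsub : ¬ T ⊆ T' := fun hsub =>
      hne (Finset.eq_of_subset_of_card_le hsub (by omega))
    obtain ⟨e, heT, heT'⟩ := Finset.not_subset.mp hsub
    obtain ⟨f, hfT', hfT, hwe, -⟩ := exchange_weights hT hT' heT heT'
    exact hfT (by rw [hw (hT.1.1 (Finset.mem_coe.mpr heT)) (hT'.1.1 (Finset.mem_coe.mpr hfT')) hwe] at heT; exact heT)
  · intro w _ T T' hT hT'
    have key : ∀ n, ∀ T, IsMST G w T → (T \ T').card ≤ n →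
        Relation.ReflTransGen (MSTExchangeStep G w) T T' := by
      intro n
      induction n with
      | zero =>
        intro T hT hcard
        have hsub : T ⊆ T' := by
          rw [← Finset.sdiff_eq_empty_iff_subset]
          exact Finset.card_eq_zero.mp (Nat.le_zero.mp hcard)
        have hc1 := spanning_card hT.1
        have hc2 := spanning_card hT'.1
        rw [Finset.eq_of_subset_of_card_le hsub (by omega)]
      | succ n ih =>
        intro T hT hcard
        by_cases hTT : T = T'
        · rw [hTT]
        · have hc1 := spanning_card hT.1
          have hc2 := spanning_card hT'.1
          have hsub : ¬ T ⊆ T' := fun hsub =>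
            hTT (Finset.eq_of_subset_of_card_le hsub (by omega))
          obtain ⟨e, heT, heT'⟩ := Finset.not_subset.mp hsub
          obtain ⟨f, hfT', hfT, hwe, hMST1⟩ := exchange_weights hT hT' heT heT'
          have hstep : MSTExchangeStep G w T (insert f (T.erase e)) :=
            ⟨hT, hMST1, e, f, heT, hfT, rfl⟩
          have hdiff : insert f (T.erase e) \ T' = (T \ T').erase e := by
            ext g
            simp only [Finset.mem_sdiff, Finset.mem_insert, Finset.mem_erase]
            constructor
            · rintro ⟨rfl | ⟨hge, hgT⟩, hgT'⟩
              · exact absurd hfT' hgT'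
              · exact ⟨hge, hgT, hgT'⟩
            · rintro ⟨hge, hgT, hgT'⟩
              exact ⟨Or.inr ⟨hge, hgT⟩, hgT'⟩
          have hmem : e ∈ T \ T' := Finset.mem_sdiff.mpr ⟨heT, heT'⟩
          have hle : (insert f (T.erase e) \ T').card ≤ n := by
            rw [hdiff, Finset.card_erase_of_mem hmem]
            omega
          exact Relation.ReflTransGen.head hstep (ih _ hMST1 hle)
    exact key _ T hT le_rfl
end

section
/- Every tree T is 3-mixing: any two proper 3-colourings of a tree can be transformed into one another by single-vertex recolourings, each intermediate colouring being a proper 3-colouring. -/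
open SimpleGraph

private lemma fin3_third : ∀ p q : Fin 3, p ≠ q → ∃ b : Fin 3, b ≠ p ∧ b ≠ q := by decide

/-- A finite tree with at least two vertices has a leaf. -/
private lemma exists_leaf {V : Type} [Fintype V] (G : SimpleGraph V) (hT : G.IsTree)
    (h2 : 2 ≤ Fintype.card V) : ∃ v u : V, G.Adj v u ∧ ∀ w, G.Adj v w → w = u := by
  classical
  have hdeg : ∀ v : V, 0 < G.degree v := by
    intro v
    rw [G.degree_pos_iff_exists_adj]
    obtain ⟨w, hw⟩ := Fintype.exists_ne_of_one_lt_card h2 v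
    obtain ⟨p⟩ := hT.isConnected.preconnected v w
    cases p with
    | nil => exact absurd rfl hw
    | cons h _ => exact ⟨_, h⟩
  have hcard : G.edgeFinset.card + 1 = Fintype.card V := hT.card_edgeFinset
  have hsum : ∑ v, G.degree v = 2 * G.edgeFinset.card :=
    G.sum_degrees_eq_twice_card_edges
  have hone : ∃ v : V, G.degree v = 1 := by
    by_contra h
    push_neg at h
    have h2d : ∀ v : V, 2 ≤ G.degree v := by
      intro v
      have := hdeg v
      have := h v
      omega
    have : 2 * Fintype.card V ≤ ∑ v, G.degree v := by
      calc 2 * Fintype.card V = ∑ _v : V, 2 := by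
            simp [Finset.sum_const, Finset.card_univ, mul_comm]
        _ ≤ ∑ v, G.degree v := Finset.sum_le_sum fun v _ => h2d v
    omega
  obtain ⟨v, hv⟩ := hone
  have : (G.neighborFinset v).card = 1 := hv
  obtain ⟨u, hu⟩ := Finset.card_eq_one.mp this
  refine ⟨v, u, ?_, ?_⟩
  · have : u ∈ G.neighborFinset v := by rw [hu]; exact Finset.mem_singleton_self u
    rwa [mem_neighborFinset] at this
  · intro w hw
    have : w ∈ G.neighborFinset v := by rwa [mem_neighborFinset]
    rw [hu, Finset.mem_singleton] at this
    exact this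

private lemma first_neighbor {V : Type} {G : SimpleGraph V} {x y : V} (p : G.Walk x y)
    (hxy : x ≠ y) : ∃ z, G.Adj x z ∧ z ∈ p.support.tail := by
  cases p with
  | nil => exact absurd rfl hxy
  | cons h q => exact ⟨_, h, by simp⟩

/-- Lift a walk avoiding `v` to the induced subgraph on the complement of `v`. -/
private def liftWalk {V : Type} {G : SimpleGraph V} (v : V) :
    ∀ {x y : V} (p : G.Walk x y), v ∉ p.support → ∀ (hx : x ≠ v) (hy : y ≠ v),
      (G.comap (Subtype.val : {w : V // w ≠ v} → V)).Walk ⟨x, hx⟩ ⟨y, hy⟩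
  | _, _, Walk.nil, _, _, _ => Walk.nil
  | x, _, @Walk.cons _ _ _ b _ h q, hs, hx, hy =>
      have hvq : v ∉ q.support := fun hm => hs (List.mem_cons_of_mem _ hm)
      have hb : b ≠ v := fun hbv => hvq (by rw [← hbv]; exact q.start_mem_support)
      Walk.cons
        (show (G.comap (Subtype.val : {w : V // w ≠ v} → V)).Adj ⟨x, hx⟩ ⟨b, hb⟩ from h)
        (liftWalk v q hvq hb hy)

/-- Deleting a leaf from a tree yields a tree. -/
private lemma comap_isTree {V : Type} {G : SimpleGraph V} (hT : G.IsTree) {v u : V}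
    (hadj : G.Adj v u) (huniq : ∀ w, G.Adj v w → w = u) :
    (G.comap (Subtype.val : {w : V // w ≠ v} → V)).IsTree := by
  classical
  constructor
  · -- connected
    haveI : Nonempty {w : V // w ≠ v} := ⟨⟨u, hadj.ne'⟩⟩
    refine ⟨?_⟩
    intro a b
    obtain ⟨w⟩ := hT.isConnected.preconnected a.val b.val
    set p := w.toPath.val with hp
    have hpath : p.IsPath := w.toPath.2
    have hvp : v ∉ p.support := by
      intro hv
      have hva : v ≠ a.val := fun h => a.2 h.symm
      have hvb : v ≠ b.val := fun h => b.2 h.symm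
      set q := p.takeUntil v hv with hq
      set r := p.dropUntil v hv with hr
      -- u appears in q.support
      obtain ⟨z₁, hz₁, hz₁m⟩ := first_neighbor q.reverse hva
      have hz₁u : z₁ = u := huniq z₁ hz₁
      have huq : u ∈ q.support := by
        have : z₁ ∈ q.reverse.support := List.mem_of_mem_tail hz₁m
        rw [Walk.support_reverse, List.mem_reverse] at this
        rwa [hz₁u] at this
      -- u appears in r.support.tail
      obtain ⟨z₂, hz₂, hz₂m⟩ := first_neighbor r hvb
      have hz₂u : z₂ = u := huniq z₂ hz₂
      have hur : u ∈ r.support.tail := hz₂u ▸ hz₂m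
      have hnd : (q.support ++ r.support.tail).Nodup := by
        have := hpath.support_nodup
        rwa [← Walk.take_spec p hv, Walk.support_append] at this
      exact List.disjoint_of_nodup_append hnd huq hur
    exact ⟨liftWalk v p hvp a.2 b.2⟩
  · -- acyclic
    intro x c hc
    have hinj : Function.Injective (Subtype.val : {w : V // w ≠ v} → V) :=
      Subtype.val_injective
    let f : G.comap (Subtype.val : {w : V // w ≠ v} → V) →g G :=
      ⟨Subtype.val, fun h => h⟩
    exact hT.IsAcyclic (c.map f) (hc.map (f := f) hinj)

/-- Extend a colouring of the complement of `v` by a colour at `v`. -/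
private def ext3 {V : Type} [DecidableEq V] (v : V) (d : {w : V // w ≠ v} → Fin 3)
    (a : Fin 3) : V → Fin 3 :=
  fun w => if h : w = v then a else d ⟨w, h⟩

private lemma ext3_v {V : Type} [DecidableEq V] (v : V) (d : {w : V // w ≠ v} → Fin 3)
    (a : Fin 3) : ext3 v d a v = a := by simp [ext3]

private lemma ext3_ne {V : Type} [DecidableEq V] (v : V) (d : {w : V // w ≠ v} → Fin 3)
    (a : Fin 3) {w : V} (h : w ≠ v) : ext3 v d a w = d ⟨w, h⟩ := by simp [ext3, h]

private lemma proper_ext3 {V : Type} [DecidableEq V] {G : SimpleGraph V} {v u : V}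
    (hadj : G.Adj v u) (huniq : ∀ w, G.Adj v w → w = u)
    {d : {w : V // w ≠ v} → Fin 3} {a : Fin 3}
    (hd : IsProperColoring (G.comap (Subtype.val : {w : V // w ≠ v} → V)) d)
    (ha : a ≠ d ⟨u, hadj.ne'⟩) :
    IsProperColoring G (ext3 v d a) := by
  intro x y hxy
  by_cases hx : x = v
  · have hyu : y = u := huniq y (hx ▸ hxy)
    rw [hx, hyu, ext3_v, ext3_ne v d a hadj.ne']
    exact ha
  · by_cases hy : y = v
    · have hxu : x = u := huniq x (hy ▸ hxy.symm)
      rw [hy, hxu, ext3_v, ext3_ne v d a hadj.ne']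
      exact fun h => ha h.symm
    · rw [ext3_ne v d a hx, ext3_ne v d a hy]
      exact hd (show (G.comap (Subtype.val : {w : V // w ≠ v} → V)).Adj ⟨x, hx⟩ ⟨y, hy⟩ from hxy)

private lemma lift_step {V : Type} [DecidableEq V] {G : SimpleGraph V} {v u : V}
    (hadj : G.Adj v u) (huniq : ∀ w, G.Adj v w → w = u)
    {d d' : {w : V // w ≠ v} → Fin 3}
    (hstep : RecolStep (G.comap (Subtype.val : {w : V // w ≠ v} → V)) d d')
    {a : Fin 3} (ha : IsProperColoring G (ext3 v d a)) :
    ∃ a', IsProperColoring G (ext3 v d' a') ∧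
      Relation.ReflTransGen (RecolStep G) (ext3 v d a) (ext3 v d' a') := by
  obtain ⟨hd, hd', x, hx, hagree⟩ := hstep
  set uu : {w : V // w ≠ v} := ⟨u, hadj.ne'⟩ with huu
  have hau : a ≠ d uu := by
    have := ha hadj
    rwa [ext3_v, ext3_ne v d a hadj.ne'] at this
  have hdiffx : ext3 v d a x.val ≠ ext3 v d' a x.val := by
    rw [ext3_ne v d a x.2, ext3_ne v d' a x.2]
    simpa using hx
  have hagreeG : ∀ b₁ b₂ : Fin 3, ∀ w : V, w ≠ x.val → w ≠ v →
      ext3 v d b₁ w = ext3 v d' b₂ w := by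
    intro b₁ b₂ w hwx hwv
    rw [ext3_ne v d b₁ hwv, ext3_ne v d' b₂ hwv]
    exact hagree ⟨w, hwv⟩ (fun h => hwx (congrArg Subtype.val h))
  by_cases hcase : a = d' uu
  · -- must recolour v first
    have hxuu : x = uu := by
      by_contra hne
      have : d uu = d' uu := hagree uu (fun h => hne h.symm)
      exact hau (hcase.trans this.symm)
    have hdd' : d uu ≠ d' uu := by rw [← hxuu]; exact hx
    obtain ⟨b, hb1, hb2⟩ := fin3_third (d uu) (d' uu) hdd'
    have hp1 : IsProperColoring G (ext3 v d b) := proper_ext3 hadj huniq hd hb1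
    have hp2 : IsProperColoring G (ext3 v d' b) := proper_ext3 hadj huniq hd' hb2
    refine ⟨b, hp2, ?_⟩
    have step1 : RecolStep G (ext3 v d a) (ext3 v d b) := by
      refine ⟨ha, hp1, v, ?_, ?_⟩
      · rw [ext3_v, ext3_v]
        intro h
        exact hb2 (h ▸ hcase.symm).symm
      · intro w hw
        rw [ext3_ne v d a hw, ext3_ne v d b hw]
    have step2 : RecolStep G (ext3 v d b) (ext3 v d' b) := by
      refine ⟨hp1, hp2, x.val, ?_, ?_⟩
      · rw [ext3_ne v d b x.2, ext3_ne v d' b x.2]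
        simpa using hx
      · intro w hw
        by_cases hwv : w = v
        · subst hwv; rw [ext3_v, ext3_v]
        · exact hagreeG b b w hw hwv
    exact (Relation.ReflTransGen.single step1).tail step2
  · -- recolour x directly
    have hp' : IsProperColoring G (ext3 v d' a) := proper_ext3 hadj huniq hd' hcase
    refine ⟨a, hp', Relation.ReflTransGen.single ⟨ha, hp', x.val, ?_, ?_⟩⟩
    · rw [ext3_ne v d a x.2, ext3_ne v d' a x.2]
      simpa using hx
    · intro w hw
      by_cases hwv : w = v
      · subst hwv; rw [ext3_v, ext3_v]
      · exact hagreeG a a w hw hwv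

private lemma lift_chain_s14 {V : Type} [DecidableEq V] {G : SimpleGraph V} {v u : V}
    (hadj : G.Adj v u) (huniq : ∀ w, G.Adj v w → w = u)
    {d d' : {w : V // w ≠ v} → Fin 3}
    (h : Relation.ReflTransGen
      (RecolStep (G.comap (Subtype.val : {w : V // w ≠ v} → V))) d d') :
    ∀ a : Fin 3, IsProperColoring G (ext3 v d a) →
      ∃ a', IsProperColoring G (ext3 v d' a') ∧
        Relation.ReflTransGen (RecolStep G) (ext3 v d a) (ext3 v d' a') := by
  induction h with
  | refl => exact fun a ha => ⟨a, ha, Relation.ReflTransGen.refl⟩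
  | tail _ hstep ih =>
      intro a ha
      obtain ⟨a₁, h₁, hchain⟩ := ih a ha
      obtain ⟨a', h', hc2⟩ := lift_step hadj huniq hstep h₁
      exact ⟨a', h', hchain.trans hc2⟩

/-- Every tree is 3-mixing. -/
theorem tree_three_mixing {V : Type} [Fintype V] (G : SimpleGraph V) (hT : G.IsTree) :
    IsMixing G 3 := by
  classical
  suffices H : ∀ n : ℕ, ∀ (V : Type) [Fintype V] (G : SimpleGraph V),
      Fintype.card V = n → G.IsTree → IsMixing G 3 from H _ V G rfl hT
  intro n
  induction n using Nat.strong_induction_on with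
  | _ n ih =>
    intro V _ G hcard hT c c' hc hc'
    classical
    by_cases hsmall : Fintype.card V ≤ 1
    · rcases eq_or_ne c c' with rfl | hne
      · exact Relation.ReflTransGen.refl
      · haveI hsub : Subsingleton V := Fintype.card_le_one_iff_subsingleton.mp hsmall
        obtain ⟨v, hv⟩ : ∃ v, c v ≠ c' v := by
          by_contra h
          push_neg at h
          exact hne (funext h)
        exact Relation.ReflTransGen.single
          ⟨hc, hc', v, hv, fun w hw => absurd (Subsingleton.elim w v) hw⟩
    · have h2 : 2 ≤ Fintype.card V := by omega
      obtain ⟨v, u, hadj, huniq⟩ := exists_leaf G hT h2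
      have hT' : (G.comap (Subtype.val : {w : V // w ≠ v} → V)).IsTree :=
        comap_isTree hT hadj huniq
      have hcard' : Fintype.card {w : V // w ≠ v} = n - 1 := by
        have : Fintype.card {w : V // w ≠ v} = Fintype.card V - 1 := by
          simp [Fintype.card_subtype_compl]
        omega
      set d := fun w : {w : V // w ≠ v} => c w.val with hd_def
      set d' := fun w : {w : V // w ≠ v} => c' w.val with hd'_def
      have hd : IsProperColoring (G.comap (Subtype.val : {w : V // w ≠ v} → V)) d :=
        fun x y h => hc h
      have hd' : IsProperColoring (G.comap (Subtype.val : {w : V // w ≠ v} → V)) d' :=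
        fun x y h => hc' h
      have hchain := ih (n - 1) (by omega) _ (G.comap Subtype.val) hcard' hT' d d' hd hd'
      have hce : ext3 v d (c v) = c := by
        funext w
        by_cases h : w = v
        · subst h; rw [ext3_v]
        · rw [ext3_ne v d (c v) h]
      have hce' : ext3 v d' (c' v) = c' := by
        funext w
        by_cases h : w = v
        · subst h; rw [ext3_v]
        · rw [ext3_ne v d' (c' v) h]
      have hprop : IsProperColoring G (ext3 v d (c v)) := hce.symm ▸ hc
      obtain ⟨a', ha', hlift⟩ := lift_chain_s14 hadj huniq hchain (c v) hprop
      rw [hce] at hlift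
      rcases eq_or_ne a' (c' v) with rfl | hne'
      · rwa [hce'] at hlift
      · refine hlift.tail ?_
        rw [← hce']
        refine ⟨ha', hce'.symm ▸ hc', v, ?_, ?_⟩
        · rw [ext3_v, ext3_v]; exact hne'
        · intro w hw
          rw [ext3_ne v d' a' hw, ext3_ne v d' (c' v) hw]
end

section
/- For the path graph P_n (n ≥ 2) and any k ≥ 3, any two proper k-colourings of P_n differ by a sequence of at most O(n²) single-vertex recolourings; in fact one can explicitly connect any two proper 3-colourings of P_n by at most n² single-vertex recolouring steps. -/
open SimpleGraph

lemma reach_one {α : Type*} {R : α → α → Prop} {a b : α} (h : R a b) : ReachN R 1 a b := by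
  show ∃ c, R a c ∧ ReachN R 0 c b
  exact ⟨b, h, rfl⟩

lemma reach_trans {α : Type*} {R : α → α → Prop} :
    ∀ {m m' : ℕ} {a b c : α}, ReachN R m a b → ReachN R m' b c → ReachN R (m + m') a c := by
  intro m
  induction m with
  | zero =>
    intro m' a b c h h'
    have h2 : a = b := h
    subst h2; simpa using h'
  | succ m IH =>
    intro m' a b c h h'
    obtain ⟨d, hd, hdb⟩ := h
    have : m + 1 + m' = (m + m') + 1 := by omega
    rw [this]
    show ∃ e, R a e ∧ ReachN R (m + m') e c
    exact ⟨d, hd, IH hdb h'⟩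

lemma adj_cases {n : ℕ} {j : ℕ} {hj : j < n} {w : Fin n}
    (h : (SimpleGraph.pathGraph n).Adj ⟨j, hj⟩ w) :
    (∃ h2 : j + 1 < n, w = ⟨j + 1, h2⟩) ∨
    (∃ j', j = j' + 1 ∧ ∃ h2 : j' < n, w = ⟨j', h2⟩) := by
  obtain ⟨wv, hwv⟩ := w
  rcases SimpleGraph.pathGraph_adj.mp h with h | h <;> simp only [Fin.val_mk] at h
  · refine Or.inl ⟨by omega, ?_⟩
    simp only [Fin.mk.injEq]; omega
  · refine Or.inr ⟨wv, by omega, hwv, rfl⟩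

lemma exists_third {k : ℕ} (hk : 3 ≤ k) (a b : Fin k) : ∃ x : Fin k, x ≠ a ∧ x ≠ b := by
  have h1 : ({a, b} : Finset (Fin k)).card ≤ 2 := by
    refine le_trans (Finset.card_insert_le _ _) ?_; simp
  have h2 : (({a, b} : Finset (Fin k))ᶜ).Nonempty := by
    rw [← Finset.card_pos, Finset.card_compl, Fintype.card_fin]; omega
  obtain ⟨x, hx⟩ := h2
  simp only [Finset.mem_compl, Finset.mem_insert, Finset.mem_singleton, not_or] at hx
  exact ⟨x, hx.1, hx.2⟩

lemma step_update {n k : ℕ} (c : Fin n → Fin k) (hc : IsProperColoring (pathGraph n) c)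
    (v : Fin n) (a : Fin k) (ha : a ≠ c v)
    (hnb : ∀ w, (pathGraph n).Adj v w → a ≠ c w) :
    RecolStep (pathGraph n) c (Function.update c v a) ∧
    IsProperColoring (pathGraph n) (Function.update c v a) := by
  have hproper : IsProperColoring (pathGraph n) (Function.update c v a) := by
    intro u w huw
    rcases eq_or_ne u v with rfl | hu
    · have hw : w ≠ u := huw.ne'
      rw [Function.update_self, Function.update_of_ne hw]
      exact hnb w huw
    · rw [Function.update_of_ne hu]
      rcases eq_or_ne w v with rfl | hw
      · rw [Function.update_self]
        exact fun h => hnb u huw.symm h.symm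
      · rw [Function.update_of_ne hw]; exact hc huw
  refine ⟨⟨hc, hproper, v, ?_, ?_⟩, hproper⟩
  · rw [Function.update_self]; exact ha.symm
  · intro w hw; rw [Function.update_of_ne hw]

lemma cascade {n k : ℕ} (hk : 3 ≤ k) :
    ∀ (j : ℕ) (hj : j < n) (c : Fin n → Fin k), IsProperColoring (pathGraph n) c →
    ∀ a : Fin k, a ≠ c ⟨j, hj⟩ →
    (∀ h : j + 1 < n, a ≠ c ⟨j + 1, h⟩) →
    ∃ (m : ℕ) (c₂ : Fin n → Fin k), m ≤ j + 1 ∧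
      ReachN (RecolStep (pathGraph n)) m c c₂ ∧
      IsProperColoring (pathGraph n) c₂ ∧
      c₂ ⟨j, hj⟩ = a ∧
      ∀ t (ht : t < n), j < t → c₂ ⟨t, ht⟩ = c ⟨t, ht⟩ := by
  intro j
  induction j with
  | zero =>
    intro hj c hc a ha ha2
    have hnb : ∀ w, (pathGraph n).Adj ⟨0, hj⟩ w → a ≠ c w := by
      intro w hadj
      rcases adj_cases hadj with ⟨h2, rfl⟩ | ⟨j', hj', _⟩
      · exact ha2 h2
      · omega
    obtain ⟨hstep, hp⟩ := step_update c hc ⟨0, hj⟩ a ha hnb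
    refine ⟨1, Function.update c ⟨0, hj⟩ a, le_refl _, reach_one hstep, hp,
      Function.update_self _ _ _, ?_⟩
    intro t ht h0t
    exact Function.update_of_ne (by simp [Fin.ext_iff]; omega) _ _
  | succ i IH =>
    intro hj c hc a ha ha2
    by_cases hblock : c ⟨i, by omega⟩ = a
    · -- need to recolour vertex i first
      obtain ⟨b, hba, hbc⟩ := exists_third hk a (c ⟨i + 1, hj⟩)
      have hb1 : b ≠ c ⟨i, by omega⟩ := by rw [hblock]; exact hba
      have hb2 : ∀ h : i + 1 < n, b ≠ c ⟨i + 1, h⟩ := fun _ => hbc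
      obtain ⟨m₁, c₁, hm₁, hr₁, hp₁, hc₁i, hc₁gt⟩ := IH (by omega) c hc b hb1 hb2
      have hc₁j : c₁ ⟨i + 1, hj⟩ = c ⟨i + 1, hj⟩ := hc₁gt (i + 1) hj (by omega)
      have ha' : a ≠ c₁ ⟨i + 1, hj⟩ := by rw [hc₁j]; exact ha
      have hnb : ∀ w, (pathGraph n).Adj ⟨i + 1, hj⟩ w → a ≠ c₁ w := by
        intro w hadj
        rcases adj_cases hadj with ⟨h2, rfl⟩ | ⟨j', hj', h2, rfl⟩
        · rw [hc₁gt (i + 1 + 1) h2 (by omega)]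
          exact ha2 h2
        · have hji : j' = i := by omega
          subst hji
          rw [hc₁i]
          exact fun h' => hba h'.symm
      obtain ⟨hstep, hp⟩ := step_update c₁ hp₁ ⟨i + 1, hj⟩ a ha' hnb
      refine ⟨m₁ + 1, Function.update c₁ ⟨i + 1, hj⟩ a, by omega,
        reach_trans hr₁ (reach_one hstep), hp, Function.update_self _ _ _, ?_⟩
      intro t ht hlt
      rw [Function.update_of_ne (by simp [Fin.ext_iff]; omega)]
      exact hc₁gt t ht (by omega)
    · -- direct recolouring
      have hnb : ∀ w, (pathGraph n).Adj ⟨i + 1, hj⟩ w → a ≠ c w := by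
        intro w hadj
        rcases adj_cases hadj with ⟨h2, rfl⟩ | ⟨j', hj', h2, rfl⟩
        · exact ha2 h2
        · have hji : j' = i := by omega
          subst hji
          exact fun h' => hblock h'.symm
      obtain ⟨hstep, hp⟩ := step_update c hc ⟨i + 1, hj⟩ a ha hnb
      refine ⟨1, Function.update c ⟨i + 1, hj⟩ a, by omega, reach_one hstep, hp,
        Function.update_self _ _ _, ?_⟩
      intro t ht hlt
      exact Function.update_of_ne (by simp [Fin.ext_iff]; omega) _ _

lemma mainloop {n k : ℕ} (hk : 3 ≤ k) (c' : Fin n → Fin k)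
    (hc' : IsProperColoring (pathGraph n) c') :
    ∀ i : ℕ, i ≤ n → ∀ c : Fin n → Fin k, IsProperColoring (pathGraph n) c →
      (∀ t (ht : t < n), i ≤ t → c ⟨t, ht⟩ = c' ⟨t, ht⟩) →
      ∃ m, m ≤ i * i ∧ ReachN (RecolStep (pathGraph n)) m c c' := by
  intro i
  induction i with
  | zero =>
    intro _ c hc hag
    refine ⟨0, le_refl _, ?_⟩
    show c = c'
    exact funext fun ⟨t, ht⟩ => hag t ht (Nat.zero_le _)
  | succ i IH =>
    intro hi c hc hag
    have hin : i < n := hi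
    have hsq : (i + 1) * (i + 1) = i * i + 2 * i + 1 := by ring
    by_cases h : c ⟨i, hin⟩ = c' ⟨i, hin⟩
    · obtain ⟨m, hm, hr⟩ := IH (by omega) c hc (fun t ht hit => by
        rcases eq_or_lt_of_le hit with rfl | h'
        · exact h
        · exact hag t ht (by omega))
      exact ⟨m, by omega, hr⟩
    · have ha : c' ⟨i, hin⟩ ≠ c ⟨i, hin⟩ := Ne.symm h
      have ha2 : ∀ h' : i + 1 < n, c' ⟨i, hin⟩ ≠ c ⟨i + 1, h'⟩ := by
        intro h'
        rw [hag (i + 1) h' (le_refl _)]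
        exact hc' (pathGraph_adj.mpr (Or.inl rfl))
      obtain ⟨m₁, c₂, hm₁, hr₁, hp₂, hc₂i, hc₂gt⟩ := cascade hk i hin c hc _ ha ha2
      have hag₂ : ∀ t (ht : t < n), i ≤ t → c₂ ⟨t, ht⟩ = c' ⟨t, ht⟩ := by
        intro t ht hit
        rcases eq_or_lt_of_le hit with rfl | h'
        · exact hc₂i
        · rw [hc₂gt t ht h']; exact hag t ht (by omega)
      obtain ⟨m₂, hm₂, hr₂⟩ := IH (by omega) c₂ hp₂ hag₂
      exact ⟨m₁ + m₂, by omega, reach_trans hr₁ hr₂⟩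

lemma key {n k : ℕ} (hk : 3 ≤ k) (c c' : Fin n → Fin k)
    (hc : IsProperColoring (pathGraph n) c) (hc' : IsProperColoring (pathGraph n) c') :
    ∃ m ≤ n ^ 2, ReachN (RecolStep (pathGraph n)) m c c' := by
  obtain ⟨m, hm, hr⟩ := mainloop hk c' hc' n (le_refl n) c hc
    (fun t ht h => absurd ht (by omega))
  exact ⟨m, by rw [pow_two]; exact hm, hr⟩

/-- On a path `Pₙ` (`n ≥ 2`), any two proper `k`-colourings (`k ≥ 3`) are connected by
`O(n²)` single-vertex recolourings; for `k = 3` at most `n²` steps suffice. -/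
theorem pathGraph_recolouring_diameter :
    (∀ k : ℕ, 3 ≤ k → ∃ C : ℕ, ∀ n : ℕ, 2 ≤ n → ∀ c c' : Fin n → Fin k,
      IsProperColoring (SimpleGraph.pathGraph n) c →
      IsProperColoring (SimpleGraph.pathGraph n) c' →
      ∃ m ≤ C * n ^ 2, ReachN (RecolStep (SimpleGraph.pathGraph n)) m c c') ∧
    (∀ n : ℕ, 2 ≤ n → ∀ c c' : Fin n → Fin 3,
      IsProperColoring (SimpleGraph.pathGraph n) c →
      IsProperColoring (SimpleGraph.pathGraph n) c' →
      ∃ m ≤ n ^ 2, ReachN (RecolStep (SimpleGraph.pathGraph n)) m c c') := by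
  constructor
  · intro k hk
    refine ⟨1, fun n _ c c' hc hc' => ?_⟩
    obtain ⟨m, hm, hr⟩ := key hk c c' hc hc'
    exact ⟨m, by omega, hr⟩
  · intro n _ c c' hc hc'
    exact key (le_refl 3) c c' hc hc'
end

section
/- Let G be a graph and v a vertex of degree at most k − 2 such that G − v is k-mixing. Then G is k-mixing. -/
/-- Extend a colouring of the vertices other than `v` by a colour at `v`. -/
def liftC {V : Type} [DecidableEq V] {k : ℕ} (v : V)
    (d : {w : V // w ≠ v} → Fin k) (a : Fin k) : V → Fin k :=
  fun w => if h : w = v then a else d ⟨w, h⟩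

theorem liftC_v {V : Type} [DecidableEq V] {k : ℕ} (v : V)
    (d : {w : V // w ≠ v} → Fin k) (a : Fin k) : liftC v d a v = a := dif_pos rfl

theorem liftC_ne {V : Type} [DecidableEq V] {k : ℕ} (v : V)
    (d : {w : V // w ≠ v} → Fin k) (a : Fin k) (w : V) (h : w ≠ v) :
    liftC v d a w = d ⟨w, h⟩ := dif_neg h

/-- If `v` has degree at most `k - 2` and `G - v` is `k`-mixing, then `G` is
`k`-mixing. -/
theorem mixing_inductive_step {V : Type} [Fintype V] [DecidableEq V]
    (G : SimpleGraph V) [DecidableRel G.Adj] (k : ℕ) (v : V)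
    (hdeg : G.degree v + 2 ≤ k)
    (hmix : IsMixing (G.induce {w : V | w ≠ v}) k) : IsMixing G k := by
  classical
  intro c c' hc hc'
  set S : Set V := {w : V | w ≠ v} with hS
  -- abbreviation
  have lift_v : ∀ (d : ↥S → Fin k) a, liftC v d a v = a := fun d a => liftC_v v d a
  have lift_ne : ∀ (d : ↥S → Fin k) a (w : V) (h : w ≠ v), liftC v d a w = d ⟨w, h⟩ :=
    fun d a w h => liftC_ne v d a w h
  -- restriction of a proper colouring is proper
  have res_proper : ∀ (c : V → Fin k), IsProperColoring G c →
      IsProperColoring (G.induce S) (fun x => c x.1) := by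
    intro c hc x y hxy
    exact hc hxy
  -- properness of a lift
  have lift_proper : ∀ (d : ↥S → Fin k) (a : Fin k),
      IsProperColoring (G.induce S) d →
      (∀ (w : V) (h : w ≠ v), G.Adj v w → a ≠ d ⟨w, h⟩) →
      IsProperColoring G (liftC v d a) := by
    intro d a hd ha u w huw
    by_cases hu : u = v
    · have hw : w ≠ v := fun h => huw.ne (hu.trans h.symm)
      rw [hu, lift_v, lift_ne _ _ _ hw]
      exact ha w hw (hu ▸ huw)
    · by_cases hw : w = v
      · rw [hw, lift_v, lift_ne _ _ _ hu]
        intro h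
        exact ha u hu (hw ▸ huw.symm) h.symm
      · rw [lift_ne _ _ _ hu, lift_ne _ _ _ hw]
        exact hd (show (G.induce S).Adj ⟨u, hu⟩ ⟨w, hw⟩ from huw)
  -- choose a colour for v avoiding the neighbours' colours and a given colour
  have choose : ∀ (d : ↥S → Fin k) (x : Fin k), ∃ b : Fin k,
      b ≠ x ∧ ∀ (w : V) (h : w ≠ v), G.Adj v w → b ≠ d ⟨w, h⟩ := by
    intro d x
    set F : Finset (Fin k) := insert x ((G.neighborFinset v).image (liftC v d x)) with hF
    have hcard : F.card < k := by
      have h1 : F.card ≤ ((G.neighborFinset v).image (liftC v d x)).card + 1 :=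
        Finset.card_insert_le _ _
      have h2 : ((G.neighborFinset v).image (liftC v d x)).card ≤ G.degree v := by
        simpa [SimpleGraph.card_neighborFinset_eq_degree] using
          Finset.card_image_le (s := G.neighborFinset v) (f := liftC v d x)
      omega
    have hne : (Fᶜ : Finset (Fin k)).Nonempty := by
      rw [← Finset.card_pos, Finset.card_compl, Fintype.card_fin]
      omega
    obtain ⟨b, hb⟩ := hne
    rw [Finset.mem_compl] at hb
    refine ⟨b, fun h => hb (h ▸ Finset.mem_insert_self _ _), ?_⟩
    intro w h hadj hbd
    apply hb
    apply Finset.mem_insert_of_mem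
    refine Finset.mem_image.2 ⟨w, ?_, ?_⟩
    · rw [SimpleGraph.mem_neighborFinset]; exact hadj
    · rw [lift_ne _ _ _ h]; exact hbd.symm
  -- recolouring v between two lifts with the same base
  have step_v : ∀ (d : ↥S → Fin k) (a b : Fin k),
      IsProperColoring G (liftC v d a) → IsProperColoring G (liftC v d b) →
      Relation.ReflTransGen (RecolStep G) (liftC v d a) (liftC v d b) := by
    intro d a b h1 h2
    by_cases hab : a = b
    · subst hab; exact Relation.ReflTransGen.refl
    · refine Relation.ReflTransGen.single ⟨h1, h2, v, ?_, ?_⟩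
      · rw [lift_v, lift_v]; exact hab
      · intro w hw; rw [lift_ne _ _ _ hw, lift_ne _ _ _ hw]
  -- lifting a recolouring step of the induced graph
  have step_u : ∀ (d d'' : ↥S → Fin k) (b : Fin k),
      RecolStep (G.induce S) d d'' →
      IsProperColoring G (liftC v d b) → IsProperColoring G (liftC v d'' b) →
      RecolStep G (liftC v d b) (liftC v d'' b) := by
    intro d d'' b hstep h1 h2
    obtain ⟨-, -, u, huu, hother⟩ := hstep
    refine ⟨h1, h2, u.1, ?_, ?_⟩
    · rw [lift_ne _ _ _ u.2, lift_ne _ _ _ u.2]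
      simpa using huu
    · intro w hw
      by_cases hwv : w = v
      · subst hwv; rw [lift_v, lift_v]
      · rw [lift_ne _ _ _ hwv, lift_ne _ _ _ hwv]
        exact hother ⟨w, hwv⟩ (fun h => hw (congrArg Subtype.val h))
  -- main induction along the mixing path in the induced graph
  have main : ∀ (d d' : ↥S → Fin k),
      Relation.ReflTransGen (RecolStep (G.induce S)) d d' →
      ∀ a : Fin k, IsProperColoring G (liftC v d a) →
      ∃ b : Fin k, IsProperColoring G (liftC v d' b) ∧
        Relation.ReflTransGen (RecolStep G) (liftC v d a) (liftC v d' b) := by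
    intro d d' hpath
    induction hpath using Relation.ReflTransGen.head_induction_on with
    | refl => exact fun a ha => ⟨a, ha, Relation.ReflTransGen.refl⟩
    | @head e f hstep htail ih =>
      intro a ha
      -- e → f is a single step, then f → d'
      obtain ⟨he, hf, u, huu, hother⟩ := hstep
      obtain ⟨b, hb, hbd⟩ := choose e (f u)
      have hbe : IsProperColoring G (liftC v e b) := lift_proper e b he hbd
      have hbf : IsProperColoring G (liftC v f b) := by
        refine lift_proper f b hf ?_
        intro w h hadj
        by_cases hwu : (⟨w, h⟩ : ↥S) = u
        · rw [hwu]; exact hb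
        · rw [← hother ⟨w, h⟩ hwu]; exact hbd w h hadj
      obtain ⟨b', hb', hpath'⟩ := ih b hbf
      exact ⟨b', hb', (step_v e a b ha hbe).trans
        ((Relation.ReflTransGen.single
          (step_u e f b ⟨he, hf, u, huu, hother⟩ hbe hbf)).trans hpath')⟩
  -- conclude
  have hres : liftC v (fun x => c x.1) (c v) = c := by
    funext w
    by_cases h : w = v
    · rw [h]; exact lift_v _ _
    · rw [lift_ne _ _ _ h]
  have hres' : liftC v (fun x => c' x.1) (c' v) = c' := by
    funext w
    by_cases h : w = v
    · rw [h]; exact lift_v _ _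
    · rw [lift_ne _ _ _ h]
  have hpath := hmix (fun x => c x.1) (fun x => c' x.1) (res_proper c hc) (res_proper c' hc')
  obtain ⟨b, hb, hpathb⟩ := main _ _ hpath (c v) (hres.symm ▸ hc)
  have hlast := step_v (fun x => c' x.1) b (c' v) hb (hres'.symm ▸ hc')
  exact Eq.mp (congrArg₂ (fun a b : V → Fin k => Relation.ReflTransGen (RecolStep G) a b)
    hres hres') (hpathb.trans hlast)
end
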